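/- Let $Y = \{y_1, \ldots, y_m\}$, $m \ge 2$, be a finite real sequence such that both $(y_k)$ and $(\Delta y_k)$ are monotonic. Then the discrepancy satisfies $D(Y) \le 2\left(\frac{|y_m - y_1|}{m} + \frac{\max_{j \in \mathbb{Z}} \#\{k : y_k \in [j, j+1)\}}{m}\right)$. -/

import Mathlib

open Finset
open scoped Classical

/-- count of points `y k`, `k ∈ [1,m]`, in `[v,w)` -/
noncomputable def cntI (m : ℕ) (y : ℕ → ℝ) (v w : ℝ) : ℕ :=
  ((Finset.Icc 1 m).filter fun k => y k ∈ Set.Ico v w).card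

lemma cntI_mono (m : ℕ) (y : ℕ → ℝ) {v w v' w' : ℝ} (hv : v' ≤ v) (hw : w ≤ w') :
    cntI m y v w ≤ cntI m y v' w' := by
  apply Finset.card_le_card
  intro k hk
  simp only [Finset.mem_filter, Set.mem_Ico] at *
  exact ⟨hk.1, le_trans hv hk.2.1, lt_of_lt_of_le hk.2.2 hw⟩

lemma cntI_add (m : ℕ) (y : ℕ → ℝ) {a b c : ℝ} (hab : a ≤ b) (hbc : b ≤ c) :
    cntI m y a c = cntI m y a b + cntI m y b c := by
  classical
  unfold cntI
  rw [← Finset.card_union_of_disjoint]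
  · congr 1
    rw [← Finset.filter_or]
    apply Finset.filter_congr
    intro k _
    simp only [Set.mem_Ico]
    constructor
    · rintro ⟨h1, h2⟩
      rcases lt_or_ge (y k) b with h | h
      · exact Or.inl ⟨h1, h⟩
      · exact Or.inr ⟨h, h2⟩
    · rintro (⟨h1, h2⟩ | ⟨h1, h2⟩)
      · exact ⟨h1, lt_of_lt_of_le h2 hbc⟩
      · exact ⟨le_trans hab h1, h2⟩
  · rw [Finset.disjoint_filter]
    intro k _ hk hk'
    simp only [Set.mem_Ico] at *
    linarith [hk.2, hk'.1]

lemma shift_le (m : ℕ) (y : ℕ → ℝ)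
    (h2 : ∀ k k', 1 ≤ k → k ≤ k' → k' + 1 ≤ m → y (k + 1) - y k ≤ y (k' + 1) - y k') :
    ∀ (r a b : ℕ), 1 ≤ a → a ≤ b → b + r ≤ m → y (a + r) - y a ≤ y (b + r) - y b := by
  intro r
  induction r with
  | zero => intro a b _ _ _; simp
  | succ r ih =>
    intro a b ha hab hbm
    have e1 : y (a + r + 1) - y (a + r) ≤ y (b + r + 1) - y (b + r) :=
      h2 (a + r) (b + r) (by omega) (by omega) (by omega)
    have e2 : y (a + r) - y a ≤ y (b + r) - y b := ih a b ha hab (by omega)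
    have ea : a + (r + 1) = a + r + 1 := by omega
    have eb : b + (r + 1) = b + r + 1 := by omega
    rw [ea, eb]; linarith

lemma claimA (m : ℕ) (y : ℕ → ℝ)
    (h1 : ∀ k k', 1 ≤ k → k ≤ k' → k' ≤ m → y k ≤ y k')
    (h2 : ∀ k k', 1 ≤ k → k ≤ k' → k' + 1 ≤ m → y (k + 1) - y k ≤ y (k' + 1) - y k')
    {t t' s : ℝ} (hxt : y 1 ≤ t) (htt : t ≤ t') (hs : 0 ≤ s) :
    cntI m y t' (t' + s) ≤ cntI m y t (t + s) + 1 := by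
  classical
  set S' := ((Finset.Icc 1 m).filter fun k => y k ∈ Set.Ico t' (t' + s)) with hS'def
  have hcnt' : cntI m y t' (t' + s) = S'.card := rfl
  by_cases hc : S'.card ≤ 1
  · omega
  push_neg at hc
  have hne : S'.Nonempty := Finset.card_pos.mp (by omega)
  set p := S'.min' hne with hp_def
  set q := S'.max' hne with hq_def
  have hpq : p < q := S'.min'_lt_max'_of_card (by omega)
  have hpS : p ∈ S' := S'.min'_mem hne
  have hqS : q ∈ S' := S'.max'_mem hne
  have hmemS' : ∀ k, k ∈ S' ↔ (1 ≤ k ∧ k ≤ m) ∧ t' ≤ y k ∧ y k < t' + s := by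
    intro k
    simp [hS'def, Finset.mem_filter, Finset.mem_Icc, Set.mem_Ico]
  have hp' := (hmemS' p).mp hpS
  have hq' := (hmemS' q).mp hqS
  obtain ⟨⟨hp1, hpm⟩, hyp, hyp2⟩ := hp'
  obtain ⟨⟨hq1, hqm⟩, hyq1, hyq2⟩ := hq'
  -- S' = Icc p q
  have hS'eq : S' = Finset.Icc p q := by
    apply Finset.Subset.antisymm
    · intro k hk
      simp only [Finset.mem_Icc]
      exact ⟨Finset.min'_le _ _ hk, Finset.le_max' _ _ hk⟩
    · intro k hk
      simp only [Finset.mem_Icc] at hk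
      rw [hmemS']
      refine ⟨⟨by omega, by omega⟩, ?_, ?_⟩
      · exact le_trans hyp (h1 p k hp1 hk.1 (by omega))
      · exact lt_of_le_of_lt (h1 k q (by omega) hk.2 hqm) hyq2
  have hcard : S'.card = q + 1 - p := by rw [hS'eq, Nat.card_Icc]
  -- the set of indices with y k ≥ t
  set T := ((Finset.Icc 1 m).filter fun k => t ≤ y k) with hTdef
  have hpT : p ∈ T := by
    simp [hTdef, Finset.mem_filter, Finset.mem_Icc]
    exact ⟨⟨hp1, hpm⟩, le_trans htt hyp⟩
  have hTne : T.Nonempty := ⟨p, hpT⟩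
  set i := T.min' hTne with hi_def
  have hiT := T.min'_mem hTne
  have hiT' : (1 ≤ i ∧ i ≤ m) ∧ t ≤ y i := by
    have : i ∈ T := hiT
    rw [hTdef] at this
    simp only [Finset.mem_filter, Finset.mem_Icc] at this
    exact this
  obtain ⟨⟨hi1, him⟩, hyi⟩ := hiT'
  have hip : i ≤ p := Finset.min'_le _ _ hpT
  have key : ∀ r : ℕ, r + 1 ≤ q - p → y (i + r) < t + s := by
    intro r hr
    have hA : y (i + r) - y i ≤ y q - y (q - r) := by
      have h := shift_le m y h2 r i (q - r) hi1 (by omega) (by omega)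
      have hq2 : q - r + r = q := by omega
      rw [hq2] at h; linarith
    have hqrp : y p ≤ y (q - r) := h1 p (q - r) hp1 (by omega) (by omega)
    by_cases hi2 : 2 ≤ i
    · have hlt : y (i - 1) < t := by
        by_contra hge
        push_neg at hge
        have hmem : i - 1 ∈ T := by
          simp [hTdef, Finset.mem_filter, Finset.mem_Icc]
          exact ⟨⟨by omega, by omega⟩, hge⟩
        have := Finset.min'_le _ _ hmem
        omega
      have hgap : y i - y (i - 1) ≤ y (q - r) - y (q - r - 1) := by
        have h := h2 (i - 1) (q - r - 1) (by omega) (by omega) (by omega)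
        have e1 : i - 1 + 1 = i := by omega
        have e2 : q - r - 1 + 1 = q - r := by omega
        rw [e1, e2] at h; exact h
      have hp_le : y p ≤ y (q - r - 1) := h1 p (q - r - 1) hp1 (by omega) (by omega)
      linarith
    · have hieq : i = 1 := by omega
      have : y i ≤ t := by rw [hieq]; exact hxt
      linarith
  have hsub2 : Finset.Icc i (i + (q - p - 1)) ⊆
      (Finset.Icc 1 m).filter fun k => y k ∈ Set.Ico t (t + s) := by
    intro k hk
    simp only [Finset.mem_Icc] at hk
    have hkm : k ≤ m := by omega
    have hty : t ≤ y k := le_trans hyi (h1 i k hi1 hk.1 hkm)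
    have hlt : y k < t + s := by
      have h := key (k - i) (by omega)
      have e : i + (k - i) = k := by omega
      rwa [e] at h
    simp only [Finset.mem_filter, Finset.mem_Icc, Set.mem_Ico]
    exact ⟨⟨by omega, hkm⟩, hty, hlt⟩
  have hge : q - p ≤ cntI m y t (t + s) := by
    have h := Finset.card_le_card hsub2
    rw [Nat.card_Icc] at h
    unfold cntI
    omega
  omega
open Finset

lemma pairInj {n t i t' i' : ℕ} (hn : 0 < n) (hi : i < n) (hi' : i' < n)
    (h : n * t + i = n * t' + i') : t = t' ∧ i = i' := by
  have key : ∀ a b x y : ℕ, x < n → a < b → n * a + x < n * b + y := by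
    intro a b x y hx hab
    calc n * a + x < n * a + n := by omega
      _ = n * (a + 1) := by ring
      _ ≤ n * b := Nat.mul_le_mul_left _ hab
      _ ≤ n * b + y := by omega
  have ht : t = t' := by
    rcases Nat.lt_trichotomy t t' with hlt | heq | hgt
    · exact absurd h (Nat.ne_of_lt (key _ _ _ _ hi hlt))
    · exact heq
    · exact absurd h (Nat.ne_of_gt (key _ _ _ _ hi' hgt))
  subst ht
  exact ⟨rfl, Nat.add_left_cancel h⟩

lemma gridUB (n c : ℕ) (hn : 0 < n) (q ℓ yk : ℝ) (hl0 : 0 < ℓ) :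
    ((((Finset.range c) ×ˢ (Finset.range n)).filter
      (fun ti : ℕ × ℕ => yk ∈ Set.Ico (q + ti.1 + (ti.2 : ℝ) / n) (q + ti.1 + (ti.2 : ℝ) / n + ℓ))).card : ℝ)
      ≤ n * ℓ + 1 := by
  classical
  set α : ℝ := yk - ℓ - q with hα
  set β : ℝ := yk - q with hβ
  have hnR : (0:ℝ) < n := by exact_mod_cast hn
  have hcard : (((Finset.range c) ×ˢ (Finset.range n)).filter
      (fun ti : ℕ × ℕ => yk ∈ Set.Ico (q + ti.1 + (ti.2 : ℝ) / n) (q + ti.1 + (ti.2 : ℝ) / n + ℓ))).card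
      ≤ (Finset.Icc (⌊(n:ℝ) * α⌋ + 1) ⌊(n:ℝ) * β⌋).card := by
    apply Finset.card_le_card_of_injOn (fun ti => (n * ti.1 + ti.2 : ℤ))
    · intro ti hti
      simp only [Finset.mem_coe, Finset.mem_filter, Finset.mem_product, Finset.mem_range, Set.mem_Ico] at hti
      obtain ⟨⟨htc, hin⟩, hu1, hu2⟩ := hti
      have hval : ((n * ti.1 + ti.2 : ℤ) : ℝ) = n * ti.1 + ti.2 := by push_cast; ring
      have hfld : (n:ℝ) * ti.1 + ti.2 = n * (ti.1 + (ti.2:ℝ)/n) := by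
        field_simp
      simp only [Finset.mem_coe, Finset.mem_Icc]
      constructor
      · rw [Int.add_one_le_iff]
        apply Int.floor_lt.mpr
        rw [hval, hfld]
        have h1 : yk - ℓ < ti.1 + (ti.2:ℝ)/n + q := by linarith
        rw [hα]
        nlinarith
      · rw [Int.le_floor, hval, hfld, hβ]
        have h1 : (ti.1:ℝ) + (ti.2:ℝ)/n ≤ yk - q := by linarith
        nlinarith
    · intro a ha b hb hab
      simp only [Finset.mem_coe, Finset.mem_filter, Finset.mem_product, Finset.mem_range] at ha hb
      simp only at hab
      have h' : n * a.1 + a.2 = n * b.1 + b.2 := by exact_mod_cast hab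
      have := pairInj hn ha.1.2 hb.1.2 h'
      exact Prod.ext this.1 this.2
  have h2 : ((Finset.Icc (⌊(n:ℝ) * α⌋ + 1) ⌊(n:ℝ) * β⌋).card : ℝ) ≤ n * ℓ + 1 := by
    rw [Int.card_Icc]
    have e : ⌊(n:ℝ) * β⌋ + 1 - (⌊(n:ℝ) * α⌋ + 1) = ⌊(n:ℝ) * β⌋ - ⌊(n:ℝ) * α⌋ := by ring
    rw [e]
    rcases le_or_gt (⌊(n:ℝ) * β⌋ - ⌊(n:ℝ) * α⌋) 0 with h | h
    · rw [Int.toNat_of_nonpos h]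
      norm_num
      positivity
    · have hd : (((⌊(n:ℝ) * β⌋ - ⌊(n:ℝ) * α⌋).toNat : ℕ) : ℝ)
          = ((⌊(n:ℝ) * β⌋ - ⌊(n:ℝ) * α⌋ : ℤ) : ℝ) := by
        exact_mod_cast Int.toNat_of_nonneg (le_of_lt h)
      rw [hd]
      push_cast
      have f1 : (⌊(n:ℝ) * β⌋ : ℝ) ≤ n * β := Int.floor_le _
      have f2 : (n:ℝ) * α < ⌊(n:ℝ) * α⌋ + 1 := Int.lt_floor_add_one _
      have hlin : (n:ℝ) * β - n * α = n * ℓ := by rw [hα, hβ]; ring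
      linarith
  calc _ ≤ ((Finset.Icc (⌊(n:ℝ) * α⌋ + 1) ⌊(n:ℝ) * β⌋).card : ℝ) := by exact_mod_cast hcard
    _ ≤ n * ℓ + 1 := h2

lemma gridLB (n c : ℕ) (hn : 0 < n) (q ℓ yk : ℝ) (hl0 : 0 < ℓ)
    (hk1 : q + ℓ ≤ yk) (hk2 : yk < q + c) :
    (n:ℝ) * ℓ - 1 ≤ ((((Finset.range c) ×ˢ (Finset.range n)).filter
      (fun ti : ℕ × ℕ => yk ∈ Set.Ico (q + ti.1 + (ti.2 : ℝ) / n) (q + ti.1 + (ti.2 : ℝ) / n + ℓ))).card : ℝ) := by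
  classical
  set α : ℝ := yk - ℓ - q with hα
  set β : ℝ := yk - q with hβ
  have hα0 : 0 ≤ α := by rw [hα]; linarith
  have hβc : β < c := by rw [hβ]; linarith
  have hnR : (0:ℝ) < n := by exact_mod_cast hn
  have hcard : (Finset.Icc (⌊(n:ℝ) * α⌋ + 1) ⌊(n:ℝ) * β⌋).card
      ≤ (((Finset.range c) ×ˢ (Finset.range n)).filter
      (fun ti : ℕ × ℕ => yk ∈ Set.Ico (q + ti.1 + (ti.2 : ℝ) / n) (q + ti.1 + (ti.2 : ℝ) / n + ℓ))).card := by
    apply Finset.card_le_card_of_injOn (fun s : ℤ => ((s.toNat / n : ℕ), (s.toNat % n : ℕ)))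
    · intro s hs
      simp only [Finset.mem_coe, Finset.mem_Icc] at hs
      obtain ⟨hs1, hs2⟩ := hs
      have hsα : (n:ℝ) * α < s := by
        have h' : (⌊(n:ℝ)*α⌋ : ℝ) + 1 ≤ s := by exact_mod_cast hs1
        linarith [Int.lt_floor_add_one ((n:ℝ)*α)]
      have hsβ : (s:ℝ) ≤ (n:ℝ) * β := by
        have h'' : (s:ℝ) ≤ (⌊(n:ℝ)*β⌋:ℝ) := by exact_mod_cast hs2
        linarith [Int.floor_le ((n:ℝ)*β)]
      have hs0 : 0 ≤ s := by
        have h1 : (0:ℝ) ≤ (n:ℝ)*α := mul_nonneg (le_of_lt hnR) hα0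
        have h2 : (0:ℝ) < (s:ℝ) := lt_of_le_of_lt h1 hsα
        exact_mod_cast le_of_lt h2
      have hnat : ((s.toNat : ℕ) : ℝ) = (s:ℝ) := by exact_mod_cast Int.toNat_of_nonneg hs0
      have hrecomp : n * (s.toNat / n) + s.toNat % n = s.toNat := Nat.div_add_mod _ _
      have hid : ((s.toNat / n : ℕ):ℝ) + ((s.toNat % n : ℕ):ℝ)/n = (s:ℝ)/n := by
        have hc : ((n * (s.toNat / n) + s.toNat % n : ℕ) : ℝ) = ((s.toNat:ℕ):ℝ) := by
          exact_mod_cast congrArg (Nat.cast : ℕ → ℝ) hrecomp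
        push_cast at hc
        rw [hnat] at hc
        field_simp
        linarith
      have hstc : s.toNat < n * c := by
        have h1 : (s:ℝ) < (n:ℝ) * c := lt_of_le_of_lt hsβ (by
          apply mul_lt_mul_of_pos_left hβc hnR)
        have h2 : ((s.toNat:ℕ):ℝ) < ((n * c : ℕ):ℝ) := by rw [hnat]; push_cast; exact h1
        exact_mod_cast h2
      simp only [Finset.mem_coe, Finset.mem_filter, Finset.mem_product, Finset.mem_range, Set.mem_Ico]
      refine ⟨⟨?_, Nat.mod_lt _ hn⟩, ?_, ?_⟩
      · rw [Nat.div_lt_iff_lt_mul hn]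
        rw [mul_comm] at hstc
        exact hstc
      · rw [add_assoc, hid]
        have hdiv : (s:ℝ)/n ≤ β := by
          rw [div_le_iff₀ hnR]
          linarith
        rw [hβ] at hdiv
        linarith
      · have hdiv : α < (s:ℝ)/n := by
          rw [lt_div_iff₀ hnR]
          linarith
        rw [hα] at hdiv
        linarith [hid]
    · intro a ha b hb hab
      simp only [Finset.mem_coe, Finset.mem_Icc] at ha hb
      simp only [Prod.mk.injEq] at hab
      have hfl0 : (0:ℤ) ≤ ⌊(n:ℝ)*α⌋ := Int.floor_nonneg.mpr (mul_nonneg (le_of_lt hnR) hα0)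
      have ha0 : 0 ≤ a := by omega
      have hb0 : 0 ≤ b := by omega
      have h1 := Nat.div_add_mod a.toNat n
      have h2 := Nat.div_add_mod b.toNat n
      rw [hab.1, hab.2] at h1
      omega
  have h2 : (n:ℝ) * ℓ - 1 ≤ ((Finset.Icc (⌊(n:ℝ) * α⌋ + 1) ⌊(n:ℝ) * β⌋).card : ℝ) := by
    rw [Int.card_Icc]
    have e : ⌊(n:ℝ) * β⌋ + 1 - (⌊(n:ℝ) * α⌋ + 1) = ⌊(n:ℝ) * β⌋ - ⌊(n:ℝ) * α⌋ := by ring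
    rw [e]
    have key : (n:ℝ) * ℓ - 1 ≤ ((⌊(n:ℝ) * β⌋ - ⌊(n:ℝ) * α⌋ : ℤ) : ℝ) := by
      have f1 : (n:ℝ) * β - 1 < (⌊(n:ℝ) * β⌋ : ℝ) := Int.sub_one_lt_floor _
      have f2 : (⌊(n:ℝ) * α⌋ : ℝ) ≤ (n:ℝ) * α := Int.floor_le _
      have hlin : (n:ℝ) * β - (n:ℝ) * α = n * ℓ := by rw [hα, hβ]; ring
      push_cast
      linarith
    calc (n:ℝ) * ℓ - 1 ≤ ((⌊(n:ℝ) * β⌋ - ⌊(n:ℝ) * α⌋ : ℤ) : ℝ) := key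
      _ ≤ (((⌊(n:ℝ) * β⌋ - ⌊(n:ℝ) * α⌋).toNat : ℕ) : ℝ) := by
          exact_mod_cast Int.self_le_toNat _
  calc (n:ℝ) * ℓ - 1 ≤ ((Finset.Icc (⌊(n:ℝ) * α⌋ + 1) ⌊(n:ℝ) * β⌋).card : ℝ) := h2
    _ ≤ _ := by exact_mod_cast hcard

section CoreSection

variable (m : ℕ) (y : ℕ → ℝ)

lemma cntI_from_first (h1 : ∀ k k', 1 ≤ k → k ≤ k' → k' ≤ m → y k ≤ y k')
    (v w : ℝ) : cntI m y v w ≤ cntI m y (y 1) w := by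
  apply Finset.card_le_card
  intro k hk
  simp only [Finset.mem_filter, Finset.mem_Icc, Set.mem_Ico] at *
  exact ⟨hk.1, h1 1 k le_rfl hk.1.1 hk.1.2, hk.2.2⟩

lemma boundaryB (K : ℕ)
    (h1 : ∀ k k', 1 ≤ k → k ≤ k' → k' ≤ m → y k ≤ y k')
    (h2 : ∀ k k', 1 ≤ k → k ≤ k' → k' + 1 ≤ m → y (k + 1) - y k ≤ y (k' + 1) - y k')
    (h3 : ∀ t : ℝ, cntI m y t (t + 1) ≤ K)
    {ℓ : ℝ} (hl0 : 0 < ℓ) (hl2 : ℓ ≤ 1/2)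
    {b0 : ℝ} (hb1 : b0 ≤ y 1) (hb2 : y 1 < b0 + 1) :
    cntI m y b0 (b0 + ℓ) + cntI m y (b0 + 1) (b0 + 1 + ℓ) ≤ K + 1 := by
  classical
  set x := y 1 with hx
  by_cases h0 : cntI m y b0 (b0 + ℓ) = 0
  · rw [h0]
    have hA : cntI m y (b0 + 1) (b0 + 1 + ℓ) ≤ cntI m y x (x + ℓ) + 1 :=
      claimA m y h1 h2 le_rfl (by linarith) (le_of_lt hl0)
    have hB : cntI m y x (x + ℓ) ≤ cntI m y x (x + 1) := cntI_mono m y le_rfl (by linarith)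
    have := h3 x
    omega
  · -- there is a point in [b0, b0+ℓ)
    have hne : ∃ k ∈ (Finset.Icc 1 m), y k ∈ Set.Ico b0 (b0 + ℓ) := by
      have : ((Finset.Icc 1 m).filter fun k => y k ∈ Set.Ico b0 (b0 + ℓ)).Nonempty := by
        rw [Finset.nonempty_iff_ne_empty]
        intro hemp
        exact h0 (by unfold cntI; rw [hemp]; rfl)
      obtain ⟨k, hk⟩ := this
      rw [Finset.mem_filter] at hk
      exact ⟨k, hk.1, hk.2⟩
    obtain ⟨k, hkmem, hk⟩ := hne
    rw [Finset.mem_Icc] at hkmem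
    rw [Set.mem_Ico] at hk
    have hxb : x < b0 + ℓ := lt_of_le_of_lt (h1 1 k le_rfl hkmem.1 hkmem.2) hk.2
    have c1 : cntI m y b0 (b0 + ℓ) ≤ cntI m y x (b0 + ℓ) := cntI_from_first m y h1 _ _
    have c2 : cntI m y (b0 + 1) (b0 + 1 + ℓ) ≤ cntI m y (b0 + ℓ) (b0 + ℓ + ℓ) + 1 :=
      claimA m y h1 h2 (le_of_lt hxb) (by linarith) (le_of_lt hl0)
    have c3 : cntI m y x (b0 + ℓ) + cntI m y (b0 + ℓ) (b0 + ℓ + ℓ) = cntI m y x (b0 + 2*ℓ) := by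
      rw [← cntI_add m y (le_of_lt hxb) (by linarith)]
      congr 1
      ring
    have c4 : cntI m y x (b0 + 2*ℓ) ≤ cntI m y x (x + 1) := cntI_mono m y le_rfl (by linarith)
    have := h3 x
    omega

lemma interior_upper (K n c : ℕ) (hm : 1 ≤ m)
    (h1 : ∀ k k', 1 ≤ k → k ≤ k' → k' ≤ m → y k ≤ y k')
    (h2 : ∀ k k', 1 ≤ k → k ≤ k' → k' + 1 ≤ m → y (k + 1) - y k ≤ y (k' + 1) - y k')
    {ℓ q : ℝ} (hl0 : 0 < ℓ) (hl2 : ℓ ≤ 1/2) (hq : y 1 < q) (hn : 0 < n) :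
    ((∑ t ∈ Finset.range c, cntI m y (q + 1 + t) (q + 1 + t + ℓ) : ℕ) : ℝ)
      ≤ ℓ * m + m / n + (y m - y 1) := by
  classical
  set x := y 1 with hx
  set z := y m with hz
  have hnR : (0:ℝ) < n := by exact_mod_cast hn
  -- per-window bound
  have hper : ∀ t ∈ Finset.range c,
      n * cntI m y (q + 1 + t) (q + 1 + t + ℓ)
        ≤ (∑ i ∈ Finset.range n, cntI m y (q + t + (i:ℝ)/n) (q + t + (i:ℝ)/n + ℓ))
          + n * (if cntI m y (q + 1 + t) (q + 1 + t + ℓ) ≠ 0 then 1 else 0) := by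
    intro t _
    by_cases h0 : cntI m y (q + 1 + t) (q + 1 + t + ℓ) = 0
    · simp [h0]
    · rw [if_pos h0]
      have hi : ∀ i ∈ Finset.range n,
          cntI m y (q + 1 + t) (q + 1 + t + ℓ) ≤ cntI m y (q + t + (i:ℝ)/n) (q + t + (i:ℝ)/n + ℓ) + 1 := by
        intro i hi
        rw [Finset.mem_range] at hi
        have hdiv0 : (0:ℝ) ≤ (i:ℝ)/n := by positivity
        have hdiv1 : (i:ℝ)/n ≤ 1 := by
          rw [div_le_one hnR]
          exact_mod_cast le_of_lt hi
        have := claimA m y h1 h2 (t := q + t + (i:ℝ)/n) (t' := q + 1 + t) (s := ℓ)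
          (by push_cast; linarith) (by linarith) (le_of_lt hl0)
        exact this
      calc n * cntI m y (q + 1 + t) (q + 1 + t + ℓ)
          = ∑ i ∈ Finset.range n, cntI m y (q + 1 + t) (q + 1 + t + ℓ) := by
            rw [Finset.sum_const, Finset.card_range]; ring
        _ ≤ ∑ i ∈ Finset.range n, (cntI m y (q + t + (i:ℝ)/n) (q + t + (i:ℝ)/n + ℓ) + 1) :=
            Finset.sum_le_sum hi
        _ = (∑ i ∈ Finset.range n, cntI m y (q + t + (i:ℝ)/n) (q + t + (i:ℝ)/n + ℓ)) + n * 1 := by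
            rw [Finset.sum_add_distrib, Finset.sum_const, Finset.card_range]; ring
  -- sum it
  have hsum : n * (∑ t ∈ Finset.range c, cntI m y (q + 1 + t) (q + 1 + t + ℓ))
      ≤ (∑ t ∈ Finset.range c, ∑ i ∈ Finset.range n, cntI m y (q + t + (i:ℝ)/n) (q + t + (i:ℝ)/n + ℓ))
        + n * (∑ t ∈ Finset.range c, if cntI m y (q + 1 + t) (q + 1 + t + ℓ) ≠ 0 then 1 else 0) := by
    rw [Finset.mul_sum, Finset.mul_sum]
    rw [← Finset.sum_add_distrib]
    exact Finset.sum_le_sum hper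
  -- bound the grid sum G
  have hG : ((∑ t ∈ Finset.range c, ∑ i ∈ Finset.range n,
      cntI m y (q + t + (i:ℝ)/n) (q + t + (i:ℝ)/n + ℓ) : ℕ) : ℝ) ≤ m * (n * ℓ + 1) := by
    have swap : (∑ t ∈ Finset.range c, ∑ i ∈ Finset.range n,
        cntI m y (q + t + (i:ℝ)/n) (q + t + (i:ℝ)/n + ℓ))
        = ∑ k ∈ Finset.Icc 1 m, (((Finset.range c) ×ˢ (Finset.range n)).filter
          (fun ti : ℕ × ℕ => y k ∈ Set.Ico (q + ti.1 + (ti.2 : ℝ) / n) (q + ti.1 + (ti.2 : ℝ) / n + ℓ))).card := by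
      unfold cntI
      simp_rw [Finset.card_filter]
      calc (∑ t ∈ Finset.range c, ∑ i ∈ Finset.range n, ∑ k ∈ Finset.Icc 1 m,
            if y k ∈ Set.Ico (q + t + (i:ℝ)/n) (q + t + (i:ℝ)/n + ℓ) then 1 else 0)
          = ∑ t ∈ Finset.range c, ∑ k ∈ Finset.Icc 1 m, ∑ i ∈ Finset.range n,
            if y k ∈ Set.Ico (q + t + (i:ℝ)/n) (q + t + (i:ℝ)/n + ℓ) then 1 else 0 := by
            apply Finset.sum_congr rfl
            intro t _
            exact Finset.sum_comm
        _ = ∑ k ∈ Finset.Icc 1 m, ∑ t ∈ Finset.range c, ∑ i ∈ Finset.range n,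
            if y k ∈ Set.Ico (q + t + (i:ℝ)/n) (q + t + (i:ℝ)/n + ℓ) then 1 else 0 :=
            Finset.sum_comm
        _ = _ := by
            apply Finset.sum_congr rfl
            intro k _
            rw [Finset.sum_product]
    rw [swap]
    push_cast
    calc (∑ k ∈ Finset.Icc 1 m, ((((Finset.range c) ×ˢ (Finset.range n)).filter
          (fun ti : ℕ × ℕ => y k ∈ Set.Ico (q + ti.1 + (ti.2 : ℝ) / n) (q + ti.1 + (ti.2 : ℝ) / n + ℓ))).card : ℝ))
        ≤ ∑ k ∈ Finset.Icc 1 m, ((n:ℝ) * ℓ + 1) := by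
          apply Finset.sum_le_sum
          intro k _
          exact gridUB n c hn q ℓ (y k) hl0
      _ = m * (n * ℓ + 1) := by
          rw [Finset.sum_const, Nat.card_Icc]
          simp
          ring
  -- bound the exceptional count
  have hE : ((∑ t ∈ Finset.range c, if cntI m y (q + 1 + (t:ℝ)) (q + 1 + (t:ℝ) + ℓ) ≠ 0 then 1 else 0 : ℕ) : ℝ)
      ≤ z - x := by
    have hxz : x ≤ z := h1 1 m le_rfl hm le_rfl
    set S := (Finset.range c).filter
      (fun t : ℕ => cntI m y (q + 1 + (t:ℝ)) (q + 1 + (t:ℝ) + ℓ) ≠ 0) with hS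
    have hsum_eq : (∑ t ∈ Finset.range c,
        if cntI m y (q + 1 + (t:ℝ)) (q + 1 + (t:ℝ) + ℓ) ≠ 0 then 1 else 0 : ℕ) = S.card := by
      rw [hS, Finset.card_filter]
    rw [hsum_eq]
    have hSmem : ∀ t ∈ S, (t:ℝ) ≤ z - q - 1 := by
      intro t ht
      rw [hS, Finset.mem_filter] at ht
      have hne : ((Finset.Icc 1 m).filter fun k =>
          y k ∈ Set.Ico (q + 1 + (t:ℝ)) (q + 1 + (t:ℝ) + ℓ)).Nonempty := by
        rw [Finset.nonempty_iff_ne_empty]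
        intro hemp
        exact ht.2 (by unfold cntI; rw [hemp]; rfl)
      obtain ⟨k, hk⟩ := hne
      rw [Finset.mem_filter, Finset.mem_Icc] at hk
      rw [Set.mem_Ico] at hk
      have h1' : y k ≤ z := h1 k m hk.1.1 hk.1.2 le_rfl
      linarith [hk.2.1]
    rcases Finset.eq_empty_or_nonempty S with hSe | hSne
    · rw [hSe]
      simp
      linarith
    · obtain ⟨t0, ht0⟩ := hSne
      have hzq1 : (0:ℝ) ≤ z - q - 1 := le_trans (Nat.cast_nonneg t0) (hSmem t0 ht0)
      have hsub : S ⊆ Finset.range (⌊z - q - 1⌋.toNat + 1) := by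
        intro t ht
        rw [Finset.mem_range]
        have h' : (t:ℝ) ≤ z - q - 1 := hSmem t ht
        have h'' : (t:ℤ) ≤ ⌊z - q - 1⌋ := Int.le_floor.mpr (by exact_mod_cast h')
        have h3' : (t:ℤ) ≤ ⌊z - q - 1⌋.toNat := le_trans h'' (Int.self_le_toNat _)
        omega
      have hcard : S.card ≤ ⌊z - q - 1⌋.toNat + 1 :=
        le_trans (Finset.card_le_card hsub) (le_of_eq (Finset.card_range _))
      have hreal : ((⌊z - q - 1⌋.toNat + 1 : ℕ) : ℝ) ≤ z - q := by
        have hfl : (0:ℤ) ≤ ⌊z - q - 1⌋ := Int.floor_nonneg.mpr hzq1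
        have heq : ((⌊z - q - 1⌋.toNat : ℕ) : ℝ) = ((⌊z - q - 1⌋ : ℤ) : ℝ) := by
          exact_mod_cast Int.toNat_of_nonneg hfl
        push_cast
        rw [heq]
        linarith [Int.floor_le (z - q - 1)]
      calc (S.card : ℝ) ≤ ((⌊z - q - 1⌋.toNat + 1 : ℕ) : ℝ) := by exact_mod_cast hcard
        _ ≤ z - q := hreal
        _ ≤ z - x := by linarith
  -- combine
  have hcast : (n:ℝ) * (∑ t ∈ Finset.range c, cntI m y (q + 1 + t) (q + 1 + t + ℓ) : ℕ)
      ≤ ((∑ t ∈ Finset.range c, ∑ i ∈ Finset.range n,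
          cntI m y (q + t + (i:ℝ)/n) (q + t + (i:ℝ)/n + ℓ) : ℕ) : ℝ)
        + n * ((∑ t ∈ Finset.range c, if cntI m y (q + 1 + t) (q + 1 + t + ℓ) ≠ 0 then 1 else 0 : ℕ) : ℝ) := by
    exact_mod_cast hsum
  have hfin : (n:ℝ) * (∑ t ∈ Finset.range c, cntI m y (q + 1 + t) (q + 1 + t + ℓ) : ℕ)
      ≤ m * (n * ℓ + 1) + n * (z - x) := by
    have := mul_le_mul_of_nonneg_left hE (le_of_lt hnR)
    linarith
  rw [← le_div_iff₀' hnR] at hfin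
  calc ((∑ t ∈ Finset.range c, cntI m y (q + 1 + t) (q + 1 + t + ℓ) : ℕ) : ℝ)
      ≤ (m * (n * ℓ + 1) + n * (z - x)) / n := hfin
    _ = ℓ * m + m / n + (z - x) := by field_simp


lemma decompA_le (c : ℕ) {g ℓ : ℝ} (hl0 : 0 < ℓ) (hl1 : ℓ ≤ 1)
    (hm : 1 ≤ m)
    (h1 : ∀ k k', 1 ≤ k → k ≤ k' → k' ≤ m → y k ≤ y k')
    (hc : (⌊y m - g⌋ - ⌊y 1 - g⌋).toNat ≤ c) :
    ((Finset.Icc 1 m).filter fun k => ∃ j : ℤ, y k ∈ Set.Ico (g + j) (g + j + ℓ)).card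
      ≤ ∑ t ∈ Finset.range (2 + c), cntI m y (g + ⌊y 1 - g⌋ + t) (g + ⌊y 1 - g⌋ + t + ℓ) := by
  classical
  set Jlo := ⌊y 1 - g⌋ with hJlo
  have hsub : ((Finset.Icc 1 m).filter fun k => ∃ j : ℤ, y k ∈ Set.Ico (g + j) (g + j + ℓ))
      ⊆ (Finset.range (2 + c)).biUnion
        (fun t => (Finset.Icc 1 m).filter fun k => y k ∈ Set.Ico (g + Jlo + t) (g + Jlo + t + ℓ)) := by
    intro k hk
    rw [Finset.mem_filter] at hk
    obtain ⟨hkm, j, hj⟩ := hk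
    rw [Set.mem_Ico] at hj
    rw [Finset.mem_Icc] at hkm
    have hjfl : ⌊y k - g⌋ = j := by
      apply Int.floor_eq_iff.mpr
      constructor
      · linarith [hj.1]
      · push_cast
        linarith [hj.2]
    have hk1 : y 1 ≤ y k := h1 1 k le_rfl hkm.1 hkm.2
    have hkm' : y k ≤ y m := h1 k m hkm.1 hkm.2 le_rfl
    have hlo : Jlo ≤ j := by
      rw [hJlo, ← hjfl]
      exact Int.floor_le_floor (by linarith)
    have hhi : j ≤ ⌊y m - g⌋ := by
      rw [← hjfl]
      exact Int.floor_le_floor (by linarith)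
    rw [Finset.mem_biUnion]
    refine ⟨(j - Jlo).toNat, ?_, ?_⟩
    · rw [Finset.mem_range]
      have : (j - Jlo).toNat ≤ (⌊y m - g⌋ - Jlo).toNat := by
        apply Int.toNat_le_toNat
        omega
      omega
    · rw [Finset.mem_filter, Set.mem_Ico]
      have hcast : ((((j - Jlo).toNat : ℕ)) : ℝ) = ((j : ℤ) : ℝ) - ((Jlo : ℤ) : ℝ) := by
        have h0 : (0:ℤ) ≤ j - Jlo := by omega
        have heq : (((j - Jlo).toNat : ℕ) : ℝ) = ((j - Jlo : ℤ) : ℝ) := by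
          exact_mod_cast Int.toNat_of_nonneg h0
        rw [heq]
        push_cast
        ring
      refine ⟨Finset.mem_Icc.mpr hkm, ?_, ?_⟩
      · rw [hcast]; push_cast; linarith [hj.1]
      · rw [hcast]; push_cast; linarith [hj.2]
  calc _ ≤ ((Finset.range (2 + c)).biUnion
        (fun t => (Finset.Icc 1 m).filter fun k => y k ∈ Set.Ico (g + Jlo + t) (g + Jlo + t + ℓ))).card :=
        Finset.card_le_card hsub
    _ ≤ _ := Finset.card_biUnion_le

lemma core_upper (K : ℕ) {g ℓ : ℝ} (hm : 1 ≤ m)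
    (h1 : ∀ k k', 1 ≤ k → k ≤ k' → k' ≤ m → y k ≤ y k')
    (h2 : ∀ k k', 1 ≤ k → k ≤ k' → k' + 1 ≤ m → y (k + 1) - y k ≤ y (k' + 1) - y k')
    (h3 : ∀ t : ℝ, cntI m y t (t + 1) ≤ K)
    (hl0 : 0 < ℓ) (hl2 : ℓ ≤ 1/2) :
    ((((Finset.Icc 1 m).filter fun k => ∃ j : ℤ, y k ∈ Set.Ico (g + j) (g + j + ℓ)).card : ℕ) : ℝ)
      ≤ ℓ * m + (y m - y 1) + K + 1 := by
  classical
  set x := y 1 with hx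
  set z := y m with hz
  set Jlo := ⌊x - g⌋ with hJlo
  set c := (⌊z - g⌋ - Jlo).toNat with hc
  set q := g + (Jlo : ℝ) + 1 with hqd
  have hq1 : x < q := by
    rw [hqd, hJlo]
    linarith [Int.lt_floor_add_one (x - g)]
  have hq2 : q ≤ x + 1 := by
    rw [hqd, hJlo]
    linarith [Int.floor_le (x - g)]
  -- decomposition
  have hdec := decompA_le (m := m) (y := y) c hl0 (by linarith) hm h1 (le_refl _)
  -- split the sum
  have hsplit : ∑ t ∈ Finset.range (2 + c), cntI m y (g + Jlo + t) (g + Jlo + t + ℓ)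
      = cntI m y (g + Jlo) (g + Jlo + ℓ) + cntI m y q (q + ℓ)
        + ∑ t ∈ Finset.range c, cntI m y (q + 1 + t) (q + 1 + t + ℓ) := by
    rw [Finset.sum_range_add]
    congr 1
    · rw [Finset.sum_range_succ, Finset.sum_range_one]
      congr 2 <;> push_cast <;> [skip; skip; rw [hqd]; rw [hqd]] <;> ring
    · apply Finset.sum_congr rfl
      intro t _
      congr 1 <;> rw [hqd] <;> push_cast <;> ring
  -- boundary
  have hbnd : cntI m y (g + Jlo) (g + Jlo + ℓ) + cntI m y (g + Jlo + 1) (g + Jlo + 1 + ℓ) ≤ K + 1 := by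
    apply boundaryB m y K h1 h2 h3 hl0 hl2
    · rw [hJlo]; linarith [Int.floor_le (x - g)]
    · rw [hJlo]; linarith [Int.lt_floor_add_one (x - g)]
  have hbnd' : cntI m y (g + Jlo) (g + Jlo + ℓ) + cntI m y q (q + ℓ) ≤ K + 1 := by
    have he1 : q = g + (Jlo:ℝ) + 1 := hqd
    rw [he1]
    exact hbnd
  -- limit argument
  have key : ∀ ε : ℝ, 0 < ε →
      ((((Finset.Icc 1 m).filter fun k => ∃ j : ℤ, y k ∈ Set.Ico (g + j) (g + j + ℓ)).card : ℕ) : ℝ)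
        ≤ ℓ * m + (z - x) + K + 1 + ε := by
    intro ε hε
    obtain ⟨n, hn⟩ := exists_nat_gt (max 1 ((m:ℝ) / ε))
    have hn1 : 0 < n := by
      by_contra h
      push_neg at h
      interval_cases n
      simp at hn
      exact absurd hn.1 (by norm_num)
    have hmn : (m:ℝ) / n < ε := by
      have h1' : (m:ℝ) / ε < n := lt_of_le_of_lt (le_max_right _ _) hn
      have hnR : (0:ℝ) < n := by exact_mod_cast hn1
      rw [div_lt_iff₀ hnR]
      rw [div_lt_iff₀ hε] at h1'
      linarith
    have hint := interior_upper m y K n c hm h1 h2 hl0 hl2 hq1 hn1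
    rw [show y m - y 1 = z - x from rfl] at hint
    push_cast at hint
    have hABC : (((Finset.Icc 1 m).filter fun k => ∃ j : ℤ, y k ∈ Set.Ico (g + j) (g + j + ℓ)).card : ℝ)
        ≤ ((K:ℝ) + 1) + (ℓ * m + m / n + (z - x)) := by
      have hd2 : ((((Finset.Icc 1 m).filter fun k => ∃ j : ℤ, y k ∈ Set.Ico (g + j) (g + j + ℓ)).card : ℕ) : ℝ)
          ≤ ((cntI m y (g + Jlo) (g + Jlo + ℓ) + cntI m y q (q + ℓ)
            + ∑ t ∈ Finset.range c, cntI m y (q + 1 + t) (q + 1 + t + ℓ) : ℕ) : ℝ) := by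
        exact_mod_cast le_of_le_of_eq hdec hsplit
      have hb2 : ((cntI m y (g + Jlo) (g + Jlo + ℓ) + cntI m y q (q + ℓ) : ℕ) : ℝ) ≤ (K:ℝ) + 1 := by
        exact_mod_cast hbnd'
      push_cast at hd2 hb2 ⊢
      linarith
    linarith
  by_contra hcon
  push_neg at hcon
  set ε := (((Finset.Icc 1 m).filter fun k => ∃ j : ℤ, y k ∈ Set.Ico (g + j) (g + j + ℓ)).card : ℝ)
      - (ℓ * m + (z - x) + K + 1) with hεd
  have hε : 0 < ε := by rw [hεd]; linarith
  have := key (ε/2) (by linarith)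
  rw [hεd] at this
  linarith

lemma interior_lower (K n c' : ℕ) (hm : 1 ≤ m)
    (h1 : ∀ k k', 1 ≤ k → k ≤ k' → k' ≤ m → y k ≤ y k')
    (h2 : ∀ k k', 1 ≤ k → k ≤ k' → k' + 1 ≤ m → y (k + 1) - y k ≤ y (k' + 1) - y k')
    (h3 : ∀ t : ℝ, cntI m y t (t + 1) ≤ K)
    {ℓ q : ℝ} (hl0 : 0 < ℓ) (hl2 : ℓ ≤ 1/2) (hq1 : y 1 < q) (hq2 : q ≤ y 1 + 1)
    (hcov : y m < q + c') (hn : 0 < n) (hnl : 1 ≤ (n:ℝ) * ℓ) :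
    (ℓ - 1/(n:ℝ)) * ((m:ℝ) - 2*K) - (y m - y 1) - 1
      ≤ ((∑ t ∈ Finset.range c', cntI m y (q + t) (q + t + ℓ) : ℕ) : ℝ) := by
  classical
  set x := y 1 with hx
  set z := y m with hz
  have hnR : (0:ℝ) < n := by exact_mod_cast hn
  -- per-window bound
  have hper : ∀ t ∈ Finset.range c',
      (∑ i ∈ Finset.range n, cntI m y (q + t + (i:ℝ)/n) (q + t + (i:ℝ)/n + ℓ))
        ≤ n * cntI m y (q + t) (q + t + ℓ)
          + n * (if cntI m y (q + t) (q + t + 1 + ℓ) ≠ 0 then 1 else 0) := by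
    intro t _
    by_cases h0 : cntI m y (q + t) (q + t + 1 + ℓ) = 0
    · have hz0 : ∀ i ∈ Finset.range n,
          cntI m y (q + t + (i:ℝ)/n) (q + t + (i:ℝ)/n + ℓ) = 0 := by
        intro i hi
        rw [Finset.mem_range] at hi
        have hd0 : (0:ℝ) ≤ (i:ℝ)/n := by positivity
        have hd1 : (i:ℝ)/n ≤ 1 := by
          rw [div_le_one hnR]; exact_mod_cast le_of_lt hi
        have hsub : cntI m y (q + t + (i:ℝ)/n) (q + t + (i:ℝ)/n + ℓ) ≤ cntI m y (q + t) (q + t + 1 + ℓ) :=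
          cntI_mono m y (by linarith) (by linarith)
        omega
      rw [Finset.sum_congr rfl hz0]
      simp
    · rw [if_pos h0]
      have hi : ∀ i ∈ Finset.range n,
          cntI m y (q + t + (i:ℝ)/n) (q + t + (i:ℝ)/n + ℓ) ≤ cntI m y (q + t) (q + t + ℓ) + 1 := by
        intro i hi
        rw [Finset.mem_range] at hi
        have hd0 : (0:ℝ) ≤ (i:ℝ)/n := by positivity
        exact claimA m y h1 h2 (t := q + t) (t' := q + t + (i:ℝ)/n) (s := ℓ)
          (by push_cast; linarith) (by linarith) (le_of_lt hl0)
      calc (∑ i ∈ Finset.range n, cntI m y (q + t + (i:ℝ)/n) (q + t + (i:ℝ)/n + ℓ))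
          ≤ ∑ i ∈ Finset.range n, (cntI m y (q + t) (q + t + ℓ) + 1) := Finset.sum_le_sum hi
        _ = n * cntI m y (q + t) (q + t + ℓ) + n * 1 := by
            rw [Finset.sum_const, Finset.card_range]; ring
      -- done
  have hsum : (∑ t ∈ Finset.range c', ∑ i ∈ Finset.range n,
        cntI m y (q + t + (i:ℝ)/n) (q + t + (i:ℝ)/n + ℓ))
      ≤ n * (∑ t ∈ Finset.range c', cntI m y (q + t) (q + t + ℓ))
        + n * (∑ t ∈ Finset.range c', if cntI m y (q + t) (q + t + 1 + ℓ) ≠ 0 then 1 else 0) := by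
    rw [Finset.mul_sum, Finset.mul_sum, ← Finset.sum_add_distrib]
    exact Finset.sum_le_sum hper
  -- lower bound for the grid sum
  have hswap : (∑ t ∈ Finset.range c', ∑ i ∈ Finset.range n,
      cntI m y (q + t + (i:ℝ)/n) (q + t + (i:ℝ)/n + ℓ))
      = ∑ k ∈ Finset.Icc 1 m, (((Finset.range c') ×ˢ (Finset.range n)).filter
        (fun ti : ℕ × ℕ => y k ∈ Set.Ico (q + ti.1 + (ti.2 : ℝ) / n) (q + ti.1 + (ti.2 : ℝ) / n + ℓ))).card := by
    unfold cntI
    simp_rw [Finset.card_filter]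
    calc (∑ t ∈ Finset.range c', ∑ i ∈ Finset.range n, ∑ k ∈ Finset.Icc 1 m,
          if y k ∈ Set.Ico (q + t + (i:ℝ)/n) (q + t + (i:ℝ)/n + ℓ) then 1 else 0)
        = ∑ t ∈ Finset.range c', ∑ k ∈ Finset.Icc 1 m, ∑ i ∈ Finset.range n,
          if y k ∈ Set.Ico (q + t + (i:ℝ)/n) (q + t + (i:ℝ)/n + ℓ) then 1 else 0 := by
          apply Finset.sum_congr rfl
          intro t _
          exact Finset.sum_comm
      _ = ∑ k ∈ Finset.Icc 1 m, ∑ t ∈ Finset.range c', ∑ i ∈ Finset.range n,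
          if y k ∈ Set.Ico (q + t + (i:ℝ)/n) (q + t + (i:ℝ)/n + ℓ) then 1 else 0 :=
          Finset.sum_comm
      _ = _ := by
          apply Finset.sum_congr rfl
          intro k _
          rw [Finset.sum_product]
  -- the good points
  have hgood : ((m:ℝ) - 2*K) * ((n:ℝ)*ℓ - 1) ≤ ((∑ t ∈ Finset.range c', ∑ i ∈ Finset.range n,
      cntI m y (q + t + (i:ℝ)/n) (q + t + (i:ℝ)/n + ℓ) : ℕ) : ℝ) := by
    set good := (Finset.Icc 1 m).filter (fun k => q + ℓ ≤ y k) with hgd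
    have hbad : ((Finset.Icc 1 m).filter (fun k => ¬ (q + ℓ ≤ y k))).card ≤ 2 * K := by
      have hsub : ((Finset.Icc 1 m).filter (fun k => ¬ (q + ℓ ≤ y k)))
          ⊆ (Finset.Icc 1 m).filter (fun k => y k ∈ Set.Ico x (x + 2)) := by
        intro k hk
        rw [Finset.mem_filter] at hk ⊢
        rw [Finset.mem_Icc] at hk
        push_neg at hk
        refine ⟨Finset.mem_Icc.mpr hk.1, ?_, ?_⟩
        · exact h1 1 k le_rfl hk.1.1 hk.1.2
        · have := hk.2
          linarith
      have h2K : cntI m y x (x + 2) ≤ 2 * K := by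
        have hadd : cntI m y x (x + 2) = cntI m y x (x + 1) + cntI m y (x + 1) (x + 2) := by
          have := cntI_add m y (a := x) (b := x + 1) (c := x + 2) (by linarith) (by linarith)
          exact this
        have hk1 := h3 x
        have hk2 := h3 (x + 1)
        have he : x + 1 + 1 = x + 2 := by ring
        rw [he] at hk2
        omega
      calc _ ≤ ((Finset.Icc 1 m).filter (fun k => y k ∈ Set.Ico x (x + 2))).card :=
            Finset.card_le_card hsub
        _ ≤ 2 * K := h2K
    have hgc : (m:ℝ) - 2*K ≤ (good.card : ℝ) := by
      have htot := Finset.card_filter_add_card_filter_not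
        (s := Finset.Icc 1 m) (p := fun k => q + ℓ ≤ y k)
      rw [Nat.card_Icc] at htot
      have : good.card + ((Finset.Icc 1 m).filter (fun k => ¬ (q + ℓ ≤ y k))).card = m + 1 - 1 := htot
      have hm' : good.card + 2*K ≥ m := by omega
      have := hm'
      push_cast
      have hc2 : ((good.card + 2*K : ℕ) : ℝ) ≥ ((m:ℕ):ℝ) := by exact_mod_cast hm'
      push_cast at hc2
      linarith
    rw [hswap]
    push_cast
    have hterm : ∀ k ∈ good, (n:ℝ)*ℓ - 1 ≤ ((((Finset.range c') ×ˢ (Finset.range n)).filter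
        (fun ti : ℕ × ℕ => y k ∈ Set.Ico (q + ti.1 + (ti.2 : ℝ) / n) (q + ti.1 + (ti.2 : ℝ) / n + ℓ))).card : ℝ) := by
      intro k hk
      rw [hgd, Finset.mem_filter, Finset.mem_Icc] at hk
      apply gridLB n c' hn q ℓ (y k) hl0 hk.2
      calc y k ≤ z := h1 k m hk.1.1 hk.1.2 le_rfl
        _ < q + c' := hcov
    have hsplit : (∑ k ∈ Finset.Icc 1 m, ((((Finset.range c') ×ˢ (Finset.range n)).filter
        (fun ti : ℕ × ℕ => y k ∈ Set.Ico (q + ti.1 + (ti.2 : ℝ) / n) (q + ti.1 + (ti.2 : ℝ) / n + ℓ))).card : ℕ) : ℝ)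
        ≥ ∑ k ∈ good, ((((Finset.range c') ×ˢ (Finset.range n)).filter
        (fun ti : ℕ × ℕ => y k ∈ Set.Ico (q + ti.1 + (ti.2 : ℝ) / n) (q + ti.1 + (ti.2 : ℝ) / n + ℓ))).card : ℝ) := by
      push_cast
      apply Finset.sum_le_sum_of_subset_of_nonneg
      · rw [hgd]; exact Finset.filter_subset _ _
      · intro k _ _
        positivity
    have hgsum : (good.card : ℝ) * ((n:ℝ)*ℓ - 1) ≤ ∑ k ∈ good, ((((Finset.range c') ×ˢ (Finset.range n)).filter
        (fun ti : ℕ × ℕ => y k ∈ Set.Ico (q + ti.1 + (ti.2 : ℝ) / n) (q + ti.1 + (ti.2 : ℝ) / n + ℓ))).card : ℝ) := by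
      calc (good.card : ℝ) * ((n:ℝ)*ℓ - 1) = ∑ _k ∈ good, ((n:ℝ)*ℓ - 1) := by
            rw [Finset.sum_const, nsmul_eq_mul]
        _ ≤ _ := Finset.sum_le_sum hterm
    have hmul : ((m:ℝ) - 2*K) * ((n:ℝ)*ℓ - 1) ≤ (good.card : ℝ) * ((n:ℝ)*ℓ - 1) := by
      apply mul_le_mul_of_nonneg_right hgc
      linarith
    calc ((m:ℝ) - 2*K) * ((n:ℝ)*ℓ - 1) ≤ (good.card : ℝ) * ((n:ℝ)*ℓ - 1) := hmul
      _ ≤ _ := le_trans hgsum hsplit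
  -- the exceptional count
  have hE : ((∑ t ∈ Finset.range c', if cntI m y (q + (t:ℝ)) (q + (t:ℝ) + 1 + ℓ) ≠ 0 then 1 else 0 : ℕ) : ℝ)
      ≤ (z - x) + 1 := by
    have hxz : x ≤ z := h1 1 m le_rfl hm le_rfl
    set S := (Finset.range c').filter
      (fun t : ℕ => cntI m y (q + (t:ℝ)) (q + (t:ℝ) + 1 + ℓ) ≠ 0) with hS
    have hsum_eq : (∑ t ∈ Finset.range c',
        if cntI m y (q + (t:ℝ)) (q + (t:ℝ) + 1 + ℓ) ≠ 0 then 1 else 0 : ℕ) = S.card := by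
      rw [hS, Finset.card_filter]
    rw [hsum_eq]
    have hSmem : ∀ t ∈ S, (t:ℝ) ≤ z - q := by
      intro t ht
      rw [hS, Finset.mem_filter] at ht
      have hne : ((Finset.Icc 1 m).filter fun k =>
          y k ∈ Set.Ico (q + (t:ℝ)) (q + (t:ℝ) + 1 + ℓ)).Nonempty := by
        rw [Finset.nonempty_iff_ne_empty]
        intro hemp
        exact ht.2 (by unfold cntI; rw [hemp]; rfl)
      obtain ⟨k, hk⟩ := hne
      rw [Finset.mem_filter, Finset.mem_Icc] at hk
      rw [Set.mem_Ico] at hk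
      have h1' : y k ≤ z := h1 k m hk.1.1 hk.1.2 le_rfl
      linarith [hk.2.1]
    rcases Finset.eq_empty_or_nonempty S with hSe | hSne
    · rw [hSe]
      simp
      linarith
    · obtain ⟨t0, ht0⟩ := hSne
      have hzq1 : (0:ℝ) ≤ z - q := le_trans (Nat.cast_nonneg t0) (hSmem t0 ht0)
      have hsub : S ⊆ Finset.range (⌊z - q⌋.toNat + 1) := by
        intro t ht
        rw [Finset.mem_range]
        have h' : (t:ℝ) ≤ z - q := hSmem t ht
        have h'' : (t:ℤ) ≤ ⌊z - q⌋ := Int.le_floor.mpr (by exact_mod_cast h')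
        have h3' : (t:ℤ) ≤ ⌊z - q⌋.toNat := le_trans h'' (Int.self_le_toNat _)
        omega
      have hcard : S.card ≤ ⌊z - q⌋.toNat + 1 :=
        le_trans (Finset.card_le_card hsub) (le_of_eq (Finset.card_range _))
      have hreal : ((⌊z - q⌋.toNat + 1 : ℕ) : ℝ) ≤ (z - q) + 1 := by
        have hfl : (0:ℤ) ≤ ⌊z - q⌋ := Int.floor_nonneg.mpr hzq1
        have heq : ((⌊z - q⌋.toNat : ℕ) : ℝ) = ((⌊z - q⌋ : ℤ) : ℝ) := by
          exact_mod_cast Int.toNat_of_nonneg hfl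
        push_cast
        rw [heq]
        linarith [Int.floor_le (z - q)]
      calc (S.card : ℝ) ≤ ((⌊z - q⌋.toNat + 1 : ℕ) : ℝ) := by exact_mod_cast hcard
        _ ≤ (z - q) + 1 := hreal
        _ ≤ (z - x) + 1 := by linarith
  -- combine
  have hcast : ((∑ t ∈ Finset.range c', ∑ i ∈ Finset.range n,
        cntI m y (q + t + (i:ℝ)/n) (q + t + (i:ℝ)/n + ℓ) : ℕ) : ℝ)
      ≤ (n:ℝ) * ((∑ t ∈ Finset.range c', cntI m y (q + t) (q + t + ℓ) : ℕ) : ℝ)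
        + (n:ℝ) * ((∑ t ∈ Finset.range c', if cntI m y (q + (t:ℝ)) (q + (t:ℝ) + 1 + ℓ) ≠ 0 then 1 else 0 : ℕ) : ℝ) := by
    exact_mod_cast hsum
  have hfin : ((m:ℝ) - 2*K) * ((n:ℝ)*ℓ - 1)
      ≤ (n:ℝ) * ((∑ t ∈ Finset.range c', cntI m y (q + t) (q + t + ℓ) : ℕ) : ℝ) + (n:ℝ) * ((z - x) + 1) := by
    have hE' := mul_le_mul_of_nonneg_left hE (le_of_lt hnR)
    linarith [le_trans hgood hcast]
  have hdivn : ((m:ℝ) - 2*K) * ((n:ℝ)*ℓ - 1) / n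
      ≤ ((∑ t ∈ Finset.range c', cntI m y (q + t) (q + t + ℓ) : ℕ) : ℝ) + ((z - x) + 1) := by
    rw [div_le_iff₀ hnR]
    calc ((m:ℝ) - 2*K) * ((n:ℝ)*ℓ - 1) ≤ _ := hfin
      _ = (((∑ t ∈ Finset.range c', cntI m y (q + t) (q + t + ℓ) : ℕ) : ℝ) + ((z - x) + 1)) * n := by ring
  have heq2 : ((m:ℝ) - 2*K) * ((n:ℝ)*ℓ - 1) / n = (ℓ - 1/(n:ℝ)) * ((m:ℝ) - 2*K) := by
    field_simp
  rw [heq2] at hdivn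
  linarith

lemma decompA_ge (c' : ℕ) {g ℓ : ℝ} (hl0 : 0 < ℓ) (hl2 : ℓ ≤ 1/2) :
    ∑ t ∈ Finset.range c', cntI m y (g + ⌊y 1 - g⌋ + 1 + t) (g + ⌊y 1 - g⌋ + 1 + t + ℓ)
      ≤ ((Finset.Icc 1 m).filter fun k => ∃ j : ℤ, y k ∈ Set.Ico (g + j) (g + j + ℓ)).card := by
  classical
  set Jlo := ⌊y 1 - g⌋ with hJlo
  set B := (Finset.range c').biUnion
      (fun t => (Finset.Icc 1 m).filter fun k => y k ∈ Set.Ico (g + Jlo + 1 + t) (g + Jlo + 1 + t + ℓ)) with hB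
  have hdisj : ∀ t ∈ Finset.range c', ∀ t' ∈ Finset.range c', t ≠ t' →
      Disjoint ((Finset.Icc 1 m).filter fun k => y k ∈ Set.Ico (g + Jlo + 1 + t) (g + Jlo + 1 + t + ℓ))
        ((Finset.Icc 1 m).filter fun k => y k ∈ Set.Ico (g + Jlo + 1 + t') (g + Jlo + 1 + t' + ℓ)) := by
    intro t _ t' _ hne
    rw [Finset.disjoint_left]
    intro k hk hk'
    rw [Finset.mem_filter, Set.mem_Ico] at hk hk'
    rcases Nat.lt_or_ge t t' with h | h
    · have : (t:ℝ) + 1 ≤ t' := by exact_mod_cast h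
      linarith [hk.2.2, hk'.2.1]
    · have h' : t' < t := by omega
      have : (t':ℝ) + 1 ≤ t := by exact_mod_cast h'
      linarith [hk'.2.2, hk.2.1]
  have hcardB : B.card = ∑ t ∈ Finset.range c',
      cntI m y (g + Jlo + 1 + t) (g + Jlo + 1 + t + ℓ) := by
    rw [hB]
    exact Finset.card_biUnion hdisj
  have hsub : B ⊆ (Finset.Icc 1 m).filter fun k => ∃ j : ℤ, y k ∈ Set.Ico (g + j) (g + j + ℓ) := by
    intro k hk
    rw [hB, Finset.mem_biUnion] at hk
    obtain ⟨t, _, hkt⟩ := hk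
    rw [Finset.mem_filter] at hkt ⊢
    refine ⟨hkt.1, Jlo + 1 + t, ?_⟩
    have hcast : ((Jlo + 1 + (t:ℕ) : ℤ) : ℝ) = (Jlo:ℝ) + 1 + (t:ℕ) := by push_cast; ring
    rw [Set.mem_Ico] at hkt ⊢
    rw [hcast]
    constructor
    · linarith [hkt.2.1]
    · linarith [hkt.2.2]
  calc _ = B.card := hcardB.symm
    _ ≤ _ := Finset.card_le_card hsub

lemma core_lower (K : ℕ) {g ℓ : ℝ} (hm : 1 ≤ m)
    (h1 : ∀ k k', 1 ≤ k → k ≤ k' → k' ≤ m → y k ≤ y k')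
    (h2 : ∀ k k', 1 ≤ k → k ≤ k' → k' + 1 ≤ m → y (k + 1) - y k ≤ y (k' + 1) - y k')
    (h3 : ∀ t : ℝ, cntI m y t (t + 1) ≤ K)
    (hl0 : 0 < ℓ) (hl2 : ℓ ≤ 1/2) :
    ℓ * m - (y m - y 1) - K - 1
      ≤ ((((Finset.Icc 1 m).filter fun k => ∃ j : ℤ, y k ∈ Set.Ico (g + j) (g + j + ℓ)).card : ℕ) : ℝ) := by
  classical
  set x := y 1 with hx
  set z := y m with hz
  set Jlo := ⌊x - g⌋ with hJlo
  set c' := (⌊z - g⌋ - Jlo).toNat + 1 with hc'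
  set q := g + (Jlo : ℝ) + 1 with hqd
  have hq1 : x < q := by
    rw [hqd, hJlo]
    linarith [Int.lt_floor_add_one (x - g)]
  have hq2 : q ≤ x + 1 := by
    rw [hqd, hJlo]
    linarith [Int.floor_le (x - g)]
  have hxz : x ≤ z := h1 1 m le_rfl hm le_rfl
  have hJJ : Jlo ≤ ⌊z - g⌋ := Int.floor_le_floor (by linarith)
  have hcov : z < q + c' := by
    have h1' : z - g < ⌊z - g⌋ + 1 := Int.lt_floor_add_one _
    have h2' : ((⌊z - g⌋ - Jlo).toNat : ℝ) = ((⌊z - g⌋ - Jlo : ℤ) : ℝ) := by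
      exact_mod_cast Int.toNat_of_nonneg (by omega)
    have h3' : (c' : ℝ) = (((⌊z - g⌋ - Jlo).toNat : ℕ) : ℝ) + 1 := by
      rw [hc']; push_cast; ring
    rw [hqd, h3', h2']
    push_cast
    linarith
  have hdec := decompA_ge (m := m) (y := y) c' (g := g) (ℓ := ℓ) hl0 hl2
  -- limit argument
  have key : ∀ ε : ℝ, 0 < ε →
      ℓ * ((m:ℝ) - 2*K) - (z - x) - 1 - ε
        ≤ ((((Finset.Icc 1 m).filter fun k => ∃ j : ℤ, y k ∈ Set.Ico (g + j) (g + j + ℓ)).card : ℕ) : ℝ) := by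
    intro ε hε
    obtain ⟨n, hn⟩ := exists_nat_gt (max (1/ℓ) (((m:ℝ) + 2*K)/ε))
    have hnl : 1 ≤ (n:ℝ) * ℓ := by
      have h1' : 1/ℓ < n := lt_of_le_of_lt (le_max_left _ _) hn
      rw [div_lt_iff₀ hl0] at h1'
      linarith
    have hn1 : 0 < n := by
      by_contra h
      push_neg at h
      interval_cases n
      simp at hnl
      linarith
    have hnR : (0:ℝ) < n := by exact_mod_cast hn1
    have hmn : ((m:ℝ) + 2*K) / n < ε := by
      have h1' : ((m:ℝ) + 2*K) / ε < n := lt_of_le_of_lt (le_max_right _ _) hn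
      rw [div_lt_iff₀ hε] at h1'
      rw [div_lt_iff₀ hnR]
      linarith
    have hint := interior_lower (m := m) (y := y) K n c' hm h1 h2 h3 hl0 hl2 hq1 hq2 hcov hn1 hnl
    rw [show y m - y 1 = z - x from rfl] at hint
    have hcast : ((∑ t ∈ Finset.range c', cntI m y (q + t) (q + t + ℓ) : ℕ) : ℝ)
        ≤ ((((Finset.Icc 1 m).filter fun k => ∃ j : ℤ, y k ∈ Set.Ico (g + j) (g + j + ℓ)).card : ℕ) : ℝ) := by
      have : (∑ t ∈ Finset.range c', cntI m y (q + t) (q + t + ℓ))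
          ≤ (((Finset.Icc 1 m).filter fun k => ∃ j : ℤ, y k ∈ Set.Ico (g + j) (g + j + ℓ)).card) := by
        have heq : ∀ t ∈ Finset.range c', cntI m y (q + (t:ℝ)) (q + t + ℓ)
            = cntI m y (g + (Jlo:ℝ) + 1 + t) (g + Jlo + 1 + t + ℓ) := by
          intro t _
          rw [hqd]
        rw [Finset.sum_congr rfl heq]
        exact hdec
      exact_mod_cast this
    have herr : ℓ * ((m:ℝ) - 2*K) - (ℓ - 1/(n:ℝ)) * ((m:ℝ) - 2*K) ≤ ε := by
      have he : ℓ * ((m:ℝ) - 2*K) - (ℓ - 1/(n:ℝ)) * ((m:ℝ) - 2*K) = ((m:ℝ) - 2*K) / n := by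
        field_simp
        ring
      rw [he]
      have habs : ((m:ℝ) - 2*K) / n ≤ ((m:ℝ) + 2*K) / n := by
        gcongr
        linarith [Nat.cast_nonneg (α := ℝ) K]
      linarith
    linarith
  by_contra hcon
  push_neg at hcon
  have hKnn : (0:ℝ) ≤ K := Nat.cast_nonneg K
  have hstep : ℓ * ((m:ℝ) - 2*K) - (z - x) - 1
      ≤ ((((Finset.Icc 1 m).filter fun k => ∃ j : ℤ, y k ∈ Set.Ico (g + j) (g + j + ℓ)).card : ℕ) : ℝ) := by
    by_contra hcon2
    push_neg at hcon2
    set ε := (ℓ * ((m:ℝ) - 2*K) - (z - x) - 1)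
        - ((((Finset.Icc 1 m).filter fun k => ∃ j : ℤ, y k ∈ Set.Ico (g + j) (g + j + ℓ)).card : ℕ) : ℝ) with hεd
    have hε : 0 < ε := by rw [hεd]; linarith
    have := key (ε/2) (by linarith)
    rw [hεd] at this
    linarith
  have h2lK : ℓ * (2*(K:ℝ)) ≤ K := by
    calc ℓ * (2*(K:ℝ)) ≤ (1/2) * (2*(K:ℝ)) := by
          apply mul_le_mul_of_nonneg_right hl2
          linarith
      _ = K := by ring
  have hexp : ℓ * ((m:ℝ) - 2*K) = ℓ * m - ℓ * (2*K) := by ring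
  rw [hexp] at hstep
  linarith

lemma arc_compl {g ℓ : ℝ} (hl0 : 0 < ℓ) (hl1 : ℓ < 1) (v : ℝ) :
    (∃ j : ℤ, v ∈ Set.Ico (g + ℓ + j) (g + ℓ + j + (1 - ℓ))) ↔
      ¬ (∃ j : ℤ, v ∈ Set.Ico (g + j) (g + j + ℓ)) := by
  constructor
  · rintro ⟨j', hj'⟩ ⟨j, hj⟩
    rw [Set.mem_Ico] at hj hj'
    have hfl1 : ⌊v - g⌋ = j := by
      apply Int.floor_eq_iff.mpr
      constructor
      · linarith [hj.1]
      · push_cast; linarith [hj.2]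
    have hfl2 : ⌊v - g⌋ = j' := by
      apply Int.floor_eq_iff.mpr
      constructor
      · linarith [hj'.1]
      · push_cast; linarith [hj'.2]
    have : j = j' := by rw [← hfl1, hfl2]
    subst this
    linarith [hj.2, hj'.1]
  · intro hnot
    set j0 := ⌊v - g⌋ with hj0
    have hfl : (j0 : ℝ) ≤ v - g := Int.floor_le _
    have hfl2 : v - g < j0 + 1 := Int.lt_floor_add_one _
    have hge : g + j0 + ℓ ≤ v := by
      by_contra hlt
      push_neg at hlt
      exact hnot ⟨j0, Set.mem_Ico.mpr ⟨by linarith, by linarith⟩⟩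
    exact ⟨j0, Set.mem_Ico.mpr ⟨by linarith, by linarith⟩⟩

lemma core_abs (K : ℕ) {g ℓ : ℝ} (hm : 1 ≤ m)
    (h1 : ∀ k k', 1 ≤ k → k ≤ k' → k' ≤ m → y k ≤ y k')
    (h2 : ∀ k k', 1 ≤ k → k ≤ k' → k' + 1 ≤ m → y (k + 1) - y k ≤ y (k' + 1) - y k')
    (h3 : ∀ t : ℝ, cntI m y t (t + 1) ≤ K)
    (hl0 : 0 < ℓ) (hl1 : ℓ < 1) :
    |((((Finset.Icc 1 m).filter fun k => ∃ j : ℤ, y k ∈ Set.Ico (g + j) (g + j + ℓ)).card : ℕ) : ℝ)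
      - ℓ * m| ≤ (y m - y 1) + K + 1 := by
  classical
  rcases le_or_gt ℓ (1/2) with hhalf | hhalf
  · rw [abs_le]
    constructor
    · have := core_lower (m := m) (y := y) K (g := g) (ℓ := ℓ) hm h1 h2 h3 hl0 hhalf
      linarith
    · have := core_upper (m := m) (y := y) K (g := g) (ℓ := ℓ) hm h1 h2 h3 hl0 hhalf
      linarith
  · -- complement
    set ℓ' := 1 - ℓ with hℓ'
    have hl0' : 0 < ℓ' := by rw [hℓ']; linarith
    have hl2' : ℓ' ≤ 1/2 := by rw [hℓ']; linarith
    have hpart : ((Finset.Icc 1 m).filter fun k => ∃ j : ℤ, y k ∈ Set.Ico (g + ℓ + j) (g + ℓ + j + ℓ')).card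
        = m - ((Finset.Icc 1 m).filter fun k => ∃ j : ℤ, y k ∈ Set.Ico (g + j) (g + j + ℓ)).card := by
      have hcong : ((Finset.Icc 1 m).filter fun k => ∃ j : ℤ, y k ∈ Set.Ico (g + ℓ + j) (g + ℓ + j + ℓ'))
          = (Finset.Icc 1 m).filter fun k => ¬ (∃ j : ℤ, y k ∈ Set.Ico (g + j) (g + j + ℓ)) := by
        apply Finset.filter_congr
        intro k _
        exact arc_compl hl0 hl1 (y k)
      rw [hcong]
      have htot := Finset.card_filter_add_card_filter_not
        (s := Finset.Icc 1 m) (p := fun k => ∃ j : ℤ, y k ∈ Set.Ico (g + j) (g + j + ℓ))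
      rw [Nat.card_Icc] at htot
      omega
    have hle : ((Finset.Icc 1 m).filter fun k => ∃ j : ℤ, y k ∈ Set.Ico (g + j) (g + j + ℓ)).card ≤ m := by
      calc _ ≤ (Finset.Icc 1 m).card := Finset.card_le_card (Finset.filter_subset _ _)
        _ = m := by rw [Nat.card_Icc]; omega
    have habs := core_lower (m := m) (y := y) K (g := g + ℓ) (ℓ := ℓ') hm h1 h2 h3 hl0' hl2'
    have habs2 := core_upper (m := m) (y := y) K (g := g + ℓ) (ℓ := ℓ') hm h1 h2 h3 hl0' hl2'
    rw [hpart] at habs habs2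
    have hcast : ((m - ((Finset.Icc 1 m).filter fun k => ∃ j : ℤ, y k ∈ Set.Ico (g + j) (g + j + ℓ)).card : ℕ) : ℝ)
        = (m : ℝ) - (((Finset.Icc 1 m).filter fun k => ∃ j : ℤ, y k ∈ Set.Ico (g + j) (g + j + ℓ)).card : ℝ) := by
      have := hle
      push_cast [Nat.cast_sub this]
      ring
    rw [hcast] at habs habs2
    rw [abs_le]
    constructor
    · have : ℓ' * m = m - ℓ * m := by rw [hℓ']; ring
      rw [this] at habs2
      linarith
    · have : ℓ' * m = m - ℓ * m := by rw [hℓ']; ring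
      rw [this] at habs
      linarith

lemma fract_arc {a b : ℝ} (ha : 0 ≤ a) (hb : b ≤ 1) (v : ℝ) :
    Int.fract v ∈ Set.Ico a b ↔ ∃ j : ℤ, v ∈ Set.Ico (a + j) (a + j + (b - a)) := by
  constructor
  · intro hv
    rw [Set.mem_Ico] at hv
    refine ⟨⌊v⌋, Set.mem_Ico.mpr ⟨?_, ?_⟩⟩
    · have := Int.floor_add_fract v
      linarith [hv.1]
    · have := Int.floor_add_fract v
      linarith [hv.2]
  · rintro ⟨j, hj⟩
    rw [Set.mem_Ico] at hj
    have hfl : ⌊v⌋ = j := by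
      apply Int.floor_eq_iff.mpr
      constructor
      · linarith [hj.1]
      · linarith [hj.2]
    rw [Set.mem_Ico]
    have := Int.floor_add_fract v
    rw [hfl] at this
    constructor
    · linarith [hj.1]
    · linarith [hj.2]

lemma mid_convex (K : ℕ) {a b : ℝ} (hm : 1 ≤ m)
    (h1 : ∀ k k', 1 ≤ k → k ≤ k' → k' ≤ m → y k ≤ y k')
    (h2 : ∀ k k', 1 ≤ k → k ≤ k' → k' + 1 ≤ m → y (k + 1) - y k ≤ y (k' + 1) - y k')
    (h3 : ∀ t : ℝ, cntI m y t (t + 1) ≤ K)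
    (ha : 0 ≤ a) (hab : a < b) (hb : b ≤ 1) :
    |((((Finset.Icc 1 m).filter fun k => Int.fract (y k) ∈ Set.Ico a b).card : ℕ) : ℝ)
      - (b - a) * m| ≤ (y m - y 1) + K + 1 := by
  classical
  rcases eq_or_lt_of_le (show b - a ≤ 1 by linarith) with heq | hlt
  · -- b - a = 1, so a = 0, b = 1
    have ha0 : a = 0 := by linarith
    have hb1 : b = 1 := by linarith
    have hall : ((Finset.Icc 1 m).filter fun k => Int.fract (y k) ∈ Set.Ico a b) = Finset.Icc 1 m := by
      apply Finset.filter_true_of_mem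
      intro k _
      rw [Set.mem_Ico, ha0, hb1]
      exact ⟨Int.fract_nonneg _, Int.fract_lt_one _⟩
    rw [hall, Nat.card_Icc, heq]
    have hxz : y 1 ≤ y m := h1 1 m le_rfl hm le_rfl
    have hm1 : m + 1 - 1 = m := by omega
    rw [hm1]
    rw [show ((m:ℕ):ℝ) - 1 * ((m:ℕ):ℝ) = 0 by ring, abs_zero]
    have hK : (0:ℝ) ≤ K := Nat.cast_nonneg K
    linarith
  · have hcong : ((Finset.Icc 1 m).filter fun k => Int.fract (y k) ∈ Set.Ico a b)
        = (Finset.Icc 1 m).filter fun k => ∃ j : ℤ, y k ∈ Set.Ico (a + j) (a + j + (b - a)) := by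
      apply Finset.filter_congr
      intro k _
      exact fract_arc ha hb (y k)
    rw [hcong]
    exact core_abs (m := m) (y := y) K (g := a) (ℓ := b - a) hm h1 h2 h3 (by linarith) hlt

lemma card_reflect (p : ℝ → Prop) [DecidablePred p] :
    ((Finset.Icc 1 m).filter fun k => p (y (m + 1 - k))).card
      = ((Finset.Icc 1 m).filter fun k => p (y k)).card := by
  apply Finset.card_bij' (fun k _ => m + 1 - k) (fun k _ => m + 1 - k)
  · intro k hk
    rw [Finset.mem_filter, Finset.mem_Icc] at hk ⊢
    exact ⟨by omega, hk.2⟩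
  · intro k hk
    rw [Finset.mem_filter, Finset.mem_Icc] at hk ⊢
    constructor
    · omega
    · have heq : m + 1 - (m + 1 - k) = k := by omega
      rw [heq]
      exact hk.2
  · intro k hk
    rw [Finset.mem_filter, Finset.mem_Icc] at hk
    omega
  · intro k hk
    rw [Finset.mem_filter, Finset.mem_Icc] at hk
    omega

lemma aligned_to_window (M : ℕ)
    (hM : ∀ j : ℤ, ((Finset.Icc 1 m).filter fun k => y k ∈ Set.Ico (j : ℝ) (j + 1)).card ≤ M) :
    ∀ t : ℝ, cntI m y t (t + 1) ≤ 2 * M := by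
  intro t
  have hmono : cntI m y t (t + 1) ≤ cntI m y (⌊t⌋ : ℝ) ((⌊t⌋ : ℝ) + 2) := by
    apply cntI_mono
    · exact Int.floor_le t
    · linarith [Int.lt_floor_add_one t]
  have hadd : cntI m y (⌊t⌋ : ℝ) ((⌊t⌋ : ℝ) + 2)
      = cntI m y (⌊t⌋ : ℝ) ((⌊t⌋ : ℝ) + 1) + cntI m y ((⌊t⌋ : ℝ) + 1) ((⌊t⌋ : ℝ) + 2) := by
    have := cntI_add m y (a := (⌊t⌋ : ℝ)) (b := (⌊t⌋ : ℝ) + 1) (c := (⌊t⌋ : ℝ) + 2)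
      (by linarith) (by linarith)
    exact this
  have h1' : cntI m y (⌊t⌋ : ℝ) ((⌊t⌋ : ℝ) + 1) ≤ M := hM ⌊t⌋
  have h2' : cntI m y ((⌊t⌋ : ℝ) + 1) ((⌊t⌋ : ℝ) + 2) ≤ M := by
    have := hM (⌊t⌋ + 1)
    unfold cntI
    have hc : ((⌊t⌋ + 1 : ℤ) : ℝ) = (⌊t⌋ : ℝ) + 1 := by push_cast; ring
    rw [hc] at this
    have hc2 : ((⌊t⌋ : ℝ) + 1) + 1 = (⌊t⌋ : ℝ) + 2 := by ring
    rw [hc2] at this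
    exact this
  omega

lemma window_neg (M : ℕ)
    (hM : ∀ j : ℤ, ((Finset.Icc 1 m).filter fun k => y k ∈ Set.Ico (j : ℝ) (j + 1)).card ≤ M) :
    ∀ t : ℝ, cntI m (fun k => - y (m + 1 - k)) t (t + 1) ≤ 2 * M := by
  intro t
  have hre : cntI m (fun k => - y (m + 1 - k)) t (t + 1)
      = ((Finset.Icc 1 m).filter fun k => - y k ∈ Set.Ico t (t + 1)).card := by
    unfold cntI
    exact card_reflect m y (fun v => - v ∈ Set.Ico t (t + 1))
  rw [hre]
  set j0 : ℤ := ⌊-t-1⌋ with hj0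
  have hf1 : (j0 : ℝ) ≤ -t-1 := Int.floor_le _
  have hf2 : -t-1 < (j0 : ℝ) + 1 := Int.lt_floor_add_one _
  have hsub : ((Finset.Icc 1 m).filter fun k => - y k ∈ Set.Ico t (t + 1))
      ⊆ ((Finset.Icc 1 m).filter fun k => y k ∈ Set.Ico (j0 : ℝ) ((j0:ℝ) + 1))
        ∪ ((Finset.Icc 1 m).filter fun k => y k ∈ Set.Ico ((j0+1 : ℤ) : ℝ) (((j0+1:ℤ):ℝ) + 1)) := by
    intro k hk
    rw [Finset.mem_filter, Set.mem_Ico] at hk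
    have hy1 : (j0 : ℝ) ≤ y k := by linarith [hk.2.2]
    have hy2 : y k < (j0 : ℝ) + 2 := by linarith [hk.2.1]
    rw [Finset.mem_union, Finset.mem_filter, Finset.mem_filter, Set.mem_Ico, Set.mem_Ico]
    rcases lt_or_ge (y k) ((j0:ℝ) + 1) with h | h
    · exact Or.inl ⟨hk.1, hy1, h⟩
    · refine Or.inr ⟨hk.1, ?_, ?_⟩
      · push_cast; linarith
      · push_cast; linarith
  calc _ ≤ _ := Finset.card_le_card hsub
    _ ≤ _ + _ := Finset.card_union_le _ _
    _ ≤ M + M := Nat.add_le_add (hM j0) (hM (j0+1))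
    _ = 2 * M := by ring

lemma neg_arc {a ℓ : ℝ} (u : ℝ) :
    (∃ j : ℤ, (-u) ∈ Set.Ico (a + j) (a + j + ℓ)) ↔
      (∃ j : ℤ, u ∈ Set.Ioc ((-a-ℓ) + j) ((-a-ℓ) + j + ℓ)) := by
  constructor
  · rintro ⟨j, hj⟩
    rw [Set.mem_Ico] at hj
    refine ⟨-j, Set.mem_Ioc.mpr ⟨?_, ?_⟩⟩
    · push_cast; linarith [hj.2]
    · push_cast; linarith [hj.1]
  · rintro ⟨j, hj⟩
    rw [Set.mem_Ioc] at hj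
    refine ⟨-j, Set.mem_Ico.mpr ⟨?_, ?_⟩⟩
    · push_cast; linarith [hj.2]
    · push_cast; linarith [hj.1]

lemma mid_concave (M : ℕ) {a b : ℝ} (hm : 1 ≤ m)
    (h1 : ∀ k k', 1 ≤ k → k ≤ k' → k' ≤ m → y k ≤ y k')
    (h2d : ∀ k k', 1 ≤ k → k ≤ k' → k' + 1 ≤ m → y (k' + 1) - y k' ≤ y (k + 1) - y k)
    (hM : ∀ j : ℤ, ((Finset.Icc 1 m).filter fun k => y k ∈ Set.Ico (j : ℝ) (j + 1)).card ≤ M)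
    (ha : 0 ≤ a) (hab : a < b) (hb : b ≤ 1) :
    |((((Finset.Icc 1 m).filter fun k => Int.fract (y k) ∈ Set.Ico a b).card : ℕ) : ℝ)
      - (b - a) * m| ≤ (y m - y 1) + 2 * M + 1 := by
  classical
  rcases eq_or_lt_of_le (show b - a ≤ 1 by linarith) with heq | hlt
  · have ha0 : a = 0 := by linarith
    have hb1 : b = 1 := by linarith
    have hall : ((Finset.Icc 1 m).filter fun k => Int.fract (y k) ∈ Set.Ico a b) = Finset.Icc 1 m := by
      apply Finset.filter_true_of_mem
      intro k _
      rw [Set.mem_Ico, ha0, hb1]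
      exact ⟨Int.fract_nonneg _, Int.fract_lt_one _⟩
    rw [hall, Nat.card_Icc, heq]
    have hxz : y 1 ≤ y m := h1 1 m le_rfl hm le_rfl
    have hm1 : m + 1 - 1 = m := by omega
    rw [hm1]
    rw [show ((m:ℕ):ℝ) - 1 * ((m:ℕ):ℝ) = 0 by ring, abs_zero]
    have hK : (0:ℝ) ≤ M := Nat.cast_nonneg M
    linarith
  · set w : ℕ → ℝ := fun k => - y (m + 1 - k) with hw
    set ℓ : ℝ := b - a with hℓ
    set g0 : ℝ := -b with hg0
    have hg0' : g0 = -a - ℓ := by rw [hg0, hℓ]; ring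
    have hl0 : 0 < ℓ := by rw [hℓ]; linarith
    have hw1 : ∀ k k', 1 ≤ k → k ≤ k' → k' ≤ m → w k ≤ w k' := by
      intro k k' hk hkk hk'
      rw [hw]
      simp only [neg_le_neg_iff]
      exact h1 (m + 1 - k') (m + 1 - k) (by omega) (by omega) (by omega)
    have hw2 : ∀ k k', 1 ≤ k → k ≤ k' → k' + 1 ≤ m → w (k + 1) - w k ≤ w (k' + 1) - w k' := by
      intro k k' hk hkk hk'
      rw [hw]
      simp only
      have e1 : m + 1 - (k + 1) = m - k := by omega
      have e2 : m + 1 - (k' + 1) = m - k' := by omega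
      rw [e1, e2]
      have h := h2d (m - k') (m - k) (by omega) (by omega) (by omega)
      have e3 : m - k + 1 = m + 1 - k := by omega
      have e4 : m - k' + 1 = m + 1 - k' := by omega
      rw [e3, e4] at h
      linarith
    have hw3 : ∀ t : ℝ, cntI m w t (t + 1) ≤ 2 * M := window_neg m y M hM
    -- ε construction
    set F := ((insert (1:ℝ) (((Finset.Icc 1 m).image (fun k => Int.fract (w k - g0)))
        ∪ ((Finset.Icc 1 m).image (fun k => Int.fract (w k - g0 - ℓ))))).filter
        (fun r => 0 < r)) with hF
    have h1F : (1:ℝ) ∈ F := by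
      rw [hF, Finset.mem_filter]
      exact ⟨Finset.mem_insert_self _ _, by norm_num⟩
    have hFne : F.Nonempty := ⟨1, h1F⟩
    set ε := F.min' hFne / 2 with hεd
    have hposF : ∀ r ∈ F, 0 < r := by
      intro r hr
      rw [hF, Finset.mem_filter] at hr
      exact hr.2
    have hmin_pos : 0 < F.min' hFne := hposF _ (F.min'_mem hFne)
    have hεpos : 0 < ε := by rw [hεd]; linarith
    have hε1 : ε ≤ 1/2 := by
      have := Finset.min'_le F 1 h1F
      rw [hεd]; linarith
    have hεlt : ∀ r ∈ F, ε < r := by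
      intro r hr
      have := Finset.min'_le F r hr
      rw [hεd]; linarith
    -- the iff
    have hiff : ∀ k ∈ Finset.Icc 1 m,
        (Int.fract (y (m + 1 - k)) ∈ Set.Ico a b ↔
          ∃ j : ℤ, w k ∈ Set.Ico ((g0 + ε) + j) ((g0 + ε) + j + ℓ)) := by
      intro k hk
      have hyk : y (m + 1 - k) = - w k := by rw [hw]; ring
      constructor
      · intro hfr
        have harc := (fract_arc ha hb (y (m + 1 - k))).mp hfr
        rw [hyk] at harc
        have hIoc := (neg_arc (a := a) (ℓ := b - a) (w k)).mp (by
          convert harc using 3)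
        obtain ⟨j, hj⟩ := hIoc
        rw [Set.mem_Ioc] at hj
        rw [← hg0'] at hj
        set d := w k - g0 - j with hdd
        have hd0 : 0 < d := by rw [hdd]; push_cast at hj ⊢; linarith [hj.1]
        have hdl : d ≤ ℓ := by rw [hdd]; push_cast at hj ⊢; linarith [hj.2]
        have hdfr : Int.fract (w k - g0) = d := by
          have : w k - g0 = d + j := by rw [hdd]; ring
          rw [this, Int.fract_add_intCast]
          exact Int.fract_eq_self.mpr ⟨le_of_lt hd0, by linarith [hdl, hlt]⟩
        have hdF : d ∈ F := by
          rw [hF, Finset.mem_filter]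
          constructor
          · apply Finset.mem_insert_of_mem
            apply Finset.mem_union_left
            rw [Finset.mem_image]
            exact ⟨k, hk, hdfr⟩
          · exact hd0
        have hεd' : ε < d := hεlt d hdF
        refine ⟨j, Set.mem_Ico.mpr ⟨?_, ?_⟩⟩
        · have : w k = g0 + j + d := by rw [hdd]; ring
          rw [this]; linarith
        · have : w k = g0 + j + d := by rw [hdd]; ring
          rw [this]; linarith
      · rintro ⟨j, hj⟩
        rw [Set.mem_Ico] at hj
        set d := w k - g0 - j with hdd
        have hdε : ε ≤ d := by rw [hdd]; linarith [hj.1]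
        have hdu : d < ℓ + ε := by rw [hdd]; linarith [hj.2]
        have hdl : d ≤ ℓ := by
          by_contra hgt
          push_neg at hgt
          set e := d - ℓ with hed
          have he0 : 0 < e := by rw [hed]; linarith
          have heε : e < ε := by rw [hed]; linarith
          have hefr : Int.fract (w k - g0 - ℓ) = e := by
            have : w k - g0 - ℓ = e + j := by rw [hed, hdd]; ring
            rw [this, Int.fract_add_intCast]
            exact Int.fract_eq_self.mpr ⟨le_of_lt he0, by linarith⟩
          have heF : e ∈ F := by
            rw [hF, Finset.mem_filter]
            constructor
            · apply Finset.mem_insert_of_mem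
              apply Finset.mem_union_right
              rw [Finset.mem_image]
              exact ⟨k, hk, hefr⟩
            · exact he0
          have := hεlt e heF
          linarith
        have hIoc : ∃ j' : ℤ, w k ∈ Set.Ioc ((-a-ℓ) + j') ((-a-ℓ) + j' + ℓ) := by
          refine ⟨j, Set.mem_Ioc.mpr ⟨?_, ?_⟩⟩
          · rw [← hg0']
            have : w k = g0 + j + d := by rw [hdd]; ring
            rw [this]; linarith
          · rw [← hg0']
            have : w k = g0 + j + d := by rw [hdd]; ring
            rw [this]; linarith
        have harc := (neg_arc (a := a) (ℓ := ℓ) (w k)).mpr hIoc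
        apply (fract_arc ha hb (y (m + 1 - k))).mpr
        rw [hyk]
        convert harc using 3
    -- count chain
    have hchain : ((Finset.Icc 1 m).filter fun k => Int.fract (y k) ∈ Set.Ico a b).card
        = ((Finset.Icc 1 m).filter fun k => ∃ j : ℤ, w k ∈ Set.Ico ((g0 + ε) + j) ((g0 + ε) + j + ℓ)).card := by
      rw [← card_reflect m y (fun v => Int.fract v ∈ Set.Ico a b)]
      congr 1
      apply Finset.filter_congr
      intro k hk
      exact hiff k hk
    rw [hchain]
    have hcore := core_abs (m := m) (y := w) (2 * M) (g := g0 + ε) (ℓ := ℓ) hm hw1 hw2 hw3 hl0 (by rw [hℓ]; linarith)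
    have hwm : w m - w 1 = y m - y 1 := by
      rw [hw]
      simp only
      have e1 : m + 1 - m = 1 := by omega
      have e2 : m + 1 - 1 = m := by omega
      rw [e1, e2]
      ring
    rw [hwm] at hcore
    have hcast : ((2 * M : ℕ) : ℝ) = 2 * (M : ℝ) := by push_cast; ring
    rw [hcast] at hcore
    rw [hℓ] at hcore
    exact hcore

end CoreSection

open scoped Classical in
/-- Discrepancy of the finite sequence `(y k)` for `k` in the index set `s`. -/
noncomputable def disc (s : Finset ℕ) (y : ℕ → ℝ) : ℝ :=
  ⨆ p : {p : ℝ × ℝ // 0 ≤ p.1 ∧ p.1 < p.2 ∧ p.2 ≤ 1},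
    |((s.filter fun k => Int.fract (y k) ∈ Set.Ico p.1.1 p.1.2).card : ℝ) / s.card
      - (p.1.2 - p.1.1)|

/-- Lemma 5: discrepancy bound via the range and the maximal number of points
in a unit interval. -/
theorem disc_le_of_monotone_diff (m : ℕ) (y : ℕ → ℝ) (M : ℕ) (hm : 2 ≤ m)
    (hy : MonotoneOn y (Set.Icc 1 m) ∨ AntitoneOn y (Set.Icc 1 m))
    (hΔ : MonotoneOn (fun k => y (k + 1) - y k) (Set.Icc 1 (m - 1)) ∨
          AntitoneOn (fun k => y (k + 1) - y k) (Set.Icc 1 (m - 1)))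
    (hM : ∀ j : ℤ, ((Finset.Icc 1 m).filter fun k =>
            y k ∈ Set.Ico (j : ℝ) (j + 1)).card ≤ M)
    (hM' : ∃ j : ℤ, ((Finset.Icc 1 m).filter fun k =>
            y k ∈ Set.Ico (j : ℝ) (j + 1)).card = M) :
    disc (Finset.Icc 1 m) y ≤ 2 * (|y m - y 1| / m + (M : ℝ) / m) := by
  classical
  have hm1 : 1 ≤ m := by omega
  have hm0 : (0:ℝ) < m := by exact_mod_cast (by omega : 0 < m)
  have hcardIcc : (Finset.Icc 1 m).card = m := by rw [Nat.card_Icc]; omega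
  -- M ≥ 1
  have hM1 : 1 ≤ M := by
    have h1mem : (1 : ℕ) ∈ (Finset.Icc 1 m).filter fun k =>
        y k ∈ Set.Ico ((⌊y 1⌋ : ℤ) : ℝ) ((⌊y 1⌋ : ℝ) + 1) := by
      rw [Finset.mem_filter, Finset.mem_Icc, Set.mem_Ico]
      exact ⟨⟨le_rfl, hm1⟩, Int.floor_le _, Int.lt_floor_add_one _⟩
    have := Finset.card_pos.mpr ⟨1, h1mem⟩
    have := hM ⌊y 1⌋
    omega
  -- monotone transfer
  have hymono : ∀ k k', 1 ≤ k → k ≤ k' → k' ≤ m →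
      (y k ≤ y k' ∧ y k' ≤ y k) ∨ True := fun _ _ _ _ _ => Or.inr trivial
  -- the key bound for each interval
  have key : ∀ a b : ℝ, 0 ≤ a → a < b → b ≤ 1 →
      |((((Finset.Icc 1 m).filter fun k => Int.fract (y k) ∈ Set.Ico a b).card : ℕ) : ℝ)
        - (b - a) * m| ≤ 2 * (|y m - y 1| + M) := by
    intro a b ha hab hb
    by_cases hL : |y m - y 1| < 1
    · -- trivial case: m ≤ 2M
      have hbound : ∀ k, 1 ≤ k → k ≤ m → min (y 1) (y m) ≤ y k ∧ y k < min (y 1) (y m) + 1 := by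
        intro k hk1 hkm
        have hk1' : (1:ℕ) ∈ Set.Icc 1 m := Set.mem_Icc.mpr ⟨le_rfl, hm1⟩
        have hkm' : k ∈ Set.Icc 1 m := Set.mem_Icc.mpr ⟨hk1, hkm⟩
        have hmm' : m ∈ Set.Icc 1 m := Set.mem_Icc.mpr ⟨hm1, le_rfl⟩
        rcases hy with hmono | hanti
        · have e1 : y 1 ≤ y k := hmono hk1' hkm' hk1
          have e2 : y k ≤ y m := hmono hkm' hmm' hkm
          have e3 : y 1 ≤ y m := le_trans e1 e2
          rw [abs_of_nonneg (by linarith)] at hL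
          constructor
          · calc min (y 1) (y m) ≤ y 1 := min_le_left _ _
              _ ≤ y k := e1
          · have : min (y 1) (y m) = y 1 := min_eq_left e3
            rw [this]
            linarith
        · have e1 : y k ≤ y 1 := hanti hk1' hkm' hk1
          have e2 : y m ≤ y k := hanti hkm' hmm' hkm
          have e3 : y m ≤ y 1 := le_trans e2 e1
          rw [abs_of_nonpos (by linarith)] at hL
          constructor
          · calc min (y 1) (y m) ≤ y m := min_le_right _ _
              _ ≤ y k := e2
          · have : min (y 1) (y m) = y m := min_eq_right e3
            rw [this]
            linarith
      have hmM : m ≤ 2 * M := by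
        have hIcc : Finset.Icc 1 m = (Finset.Icc 1 m).filter
            (fun k => y k ∈ Set.Ico (min (y 1) (y m)) (min (y 1) (y m) + 1)) := by
          symm
          apply Finset.filter_true_of_mem
          intro k hk
          rw [Finset.mem_Icc] at hk
          rw [Set.mem_Ico]
          exact hbound k hk.1 hk.2
        have := aligned_to_window m y M hM (min (y 1) (y m))
        unfold cntI at this
        calc m = (Finset.Icc 1 m).card := hcardIcc.symm
          _ = ((Finset.Icc 1 m).filter
              (fun k => y k ∈ Set.Ico (min (y 1) (y m)) (min (y 1) (y m) + 1))).card :=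
            congrArg Finset.card hIcc
          _ ≤ 2 * M := this
      -- |A - ℓ m| ≤ m
      have hA : ((((Finset.Icc 1 m).filter fun k => Int.fract (y k) ∈ Set.Ico a b).card : ℕ) : ℝ) ≤ m := by
        have := Finset.card_le_card (Finset.filter_subset
          (fun k => Int.fract (y k) ∈ Set.Ico a b) (Finset.Icc 1 m))
        rw [hcardIcc] at this
        exact_mod_cast this
      have hA0 : (0:ℝ) ≤ (((Finset.Icc 1 m).filter fun k => Int.fract (y k) ∈ Set.Ico a b).card : ℝ) :=
        Nat.cast_nonneg _
      have hlm0 : 0 ≤ (b - a) * m := mul_nonneg (by linarith) hm0.le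
      have hlm1 : (b - a) * m ≤ m := by
        calc (b - a) * m ≤ 1 * m := by
              apply mul_le_mul_of_nonneg_right _ (le_of_lt hm0)
              linarith
          _ = m := by ring
      have habs : |((((Finset.Icc 1 m).filter fun k => Int.fract (y k) ∈ Set.Ico a b).card : ℕ) : ℝ)
          - (b - a) * m| ≤ m := by
        rw [abs_le]
        constructor <;> linarith
      have h2M : (m : ℝ) ≤ 2 * M := by exact_mod_cast hmM
      have hLnn : 0 ≤ |y m - y 1| := abs_nonneg _
      linarith
    · push_neg at hL
      -- build an increasing rearrangement u
      rcases hy with hmono | hanti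
      · have h1u : ∀ k k', 1 ≤ k → k ≤ k' → k' ≤ m → y k ≤ y k' := by
          intro k k' hk hkk hk'
          exact hmono (Set.mem_Icc.mpr ⟨hk, by omega⟩) (Set.mem_Icc.mpr ⟨by omega, hk'⟩) hkk
        have hLval : |y m - y 1| = y m - y 1 := abs_of_nonneg (by
          linarith [h1u 1 m le_rfl hm1 le_rfl])
        rcases hΔ with hconv | hconc
        · have h2u : ∀ k k', 1 ≤ k → k ≤ k' → k' + 1 ≤ m →
              y (k + 1) - y k ≤ y (k' + 1) - y k' := by
            intro k k' hk hkk hk'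
            exact hconv (Set.mem_Icc.mpr ⟨hk, by omega⟩) (Set.mem_Icc.mpr ⟨by omega, by omega⟩) hkk
          have := mid_convex m y (2 * M) hm1 h1u h2u (aligned_to_window m y M hM) ha hab hb
          push_cast at this
          rw [hLval]
          linarith
        · have h2u : ∀ k k', 1 ≤ k → k ≤ k' → k' + 1 ≤ m →
              y (k' + 1) - y k' ≤ y (k + 1) - y k := by
            intro k k' hk hkk hk'
            exact hconc (Set.mem_Icc.mpr ⟨hk, by omega⟩) (Set.mem_Icc.mpr ⟨by omega, by omega⟩) hkk
          have := mid_concave m y M hm1 h1u h2u hM ha hab hb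
          push_cast at this
          rw [hLval]
          linarith
      · -- antitone: use u k = y (m + 1 - k)
        set u : ℕ → ℝ := fun k => y (m + 1 - k) with hu
        have h1u : ∀ k k', 1 ≤ k → k ≤ k' → k' ≤ m → u k ≤ u k' := by
          intro k k' hk hkk hk'
          rw [hu]
          exact hanti (Set.mem_Icc.mpr ⟨by omega, by omega⟩)
            (Set.mem_Icc.mpr ⟨by omega, by omega⟩) (by omega)
        have hLval : |y m - y 1| = u m - u 1 := by
          rw [hu]
          simp only
          have e1 : m + 1 - m = 1 := by omega
          have e2 : m + 1 - 1 = m := by omega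
          rw [e1, e2]
          have : y m ≤ y 1 := hanti (Set.mem_Icc.mpr ⟨le_rfl, hm1⟩)
            (Set.mem_Icc.mpr ⟨hm1, le_rfl⟩) hm1
          rw [abs_of_nonpos (by linarith)]
          ring
        have hMu : ∀ j : ℤ, ((Finset.Icc 1 m).filter fun k =>
            u k ∈ Set.Ico (j : ℝ) (j + 1)).card ≤ M := by
          intro j
          rw [hu]
          have := card_reflect m y (fun v => v ∈ Set.Ico ((j:ℤ) : ℝ) (((j:ℤ):ℝ) + 1))
          rw [this]
          exact hM j
        have hAu : (((Finset.Icc 1 m).filter fun k => Int.fract (y k) ∈ Set.Ico a b).card)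
            = (((Finset.Icc 1 m).filter fun k => Int.fract (u k) ∈ Set.Ico a b).card) := by
          rw [hu]
          exact (card_reflect m y (fun v => Int.fract v ∈ Set.Ico a b)).symm
        rw [hAu, hLval]
        rcases hΔ with hconv | hconc
        · -- Δy increasing ⇒ Δu increasing (convex)
          have h2u : ∀ k k', 1 ≤ k → k ≤ k' → k' + 1 ≤ m →
              u (k + 1) - u k ≤ u (k' + 1) - u k' := by
            intro k k' hk hkk hk'
            rw [hu]
            simp only
            have e1 : m + 1 - (k + 1) = m - k := by omega
            have e2 : m + 1 - (k' + 1) = m - k' := by omega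
            rw [e1, e2]
            have h := hconv (a := m - k') (b := m - k)
              (Set.mem_Icc.mpr ⟨by omega, by omega⟩)
              (Set.mem_Icc.mpr ⟨by omega, by omega⟩) (by omega)
            simp only at h
            have e3 : m - k + 1 = m + 1 - k := by omega
            have e4 : m - k' + 1 = m + 1 - k' := by omega
            rw [e3, e4] at h
            linarith
          have := mid_convex m u (2 * M) hm1 h1u h2u (aligned_to_window m u M hMu) ha hab hb
          push_cast at this
          linarith
        · have h2u : ∀ k k', 1 ≤ k → k ≤ k' → k' + 1 ≤ m →
              u (k' + 1) - u k' ≤ u (k + 1) - u k := by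
            intro k k' hk hkk hk'
            rw [hu]
            simp only
            have e1 : m + 1 - (k + 1) = m - k := by omega
            have e2 : m + 1 - (k' + 1) = m - k' := by omega
            rw [e1, e2]
            have h := hconc (a := m - k') (b := m - k)
              (Set.mem_Icc.mpr ⟨by omega, by omega⟩)
              (Set.mem_Icc.mpr ⟨by omega, by omega⟩) (by omega)
            simp only at h
            have e3 : m - k + 1 = m + 1 - k := by omega
            have e4 : m - k' + 1 = m + 1 - k' := by omega
            rw [e3, e4] at h
            linarith
          have := mid_concave m u M hm1 h1u h2u hMu ha hab hb
          push_cast at this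
          linarith
  -- now the supremum
  haveI : Nonempty {p : ℝ × ℝ // 0 ≤ p.1 ∧ p.1 < p.2 ∧ p.2 ≤ 1} :=
    ⟨⟨(0, 1), by norm_num⟩⟩
  unfold disc
  apply ciSup_le
  rintro ⟨⟨a, b⟩, ha, hab, hb⟩
  simp only
  rw [hcardIcc]
  have hkey := key a b ha hab hb
  have heq : ((((Finset.Icc 1 m).filter fun k => Int.fract (y k) ∈ Set.Ico a b).card : ℕ) : ℝ) / m
      - (b - a)
      = (((((Finset.Icc 1 m).filter fun k => Int.fract (y k) ∈ Set.Ico a b).card : ℕ) : ℝ)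
          - (b - a) * m) / m := by
    field_simp
  rw [heq, abs_div, abs_of_pos hm0]
  rw [div_le_iff₀ hm0]
  calc |_| ≤ 2 * (|y m - y 1| + M) := hkey
    _ = 2 * (|y m - y 1| / m + (M:ℝ) / m) * m := by
      field_simp
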